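/- arXiv:1805.03780 — 3 statements merged into one kernel-verified Lean document; each statement's English description precedes it below -/
import Mathlib

section
/- Let q be a complex number with 0 < |q| < 1 and let ζ = e^{iπ/5}. Then Σ_{n∈ℤ} (1−ζ)(1−ζ^{-1})(−1)^n q^{n²+2n} / ((1−ζq^{2n})(1−ζ^{-1}q^{2n})) = 2 Σ_{n∈ℤ} (−1)^n q^{n²+2n}/(1+q^{10n}) + (ζ²−ζ³) · 2 Σ_{n∈ℤ} (−1)^n q^{n²+2n}(q^{2n}−1)/(1+q^{10n}). -/
open scoped BigOperators

/-- The infinite q-Pochhammer symbol `(x; q)_∞ = ∏_{n=0}^∞ (1 - x qⁿ)`. -/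
noncomputable def poch (x q : ℂ) : ℂ := ∏' n : ℕ, (1 - x * q ^ n)

/-- `J_m = (q^m; q^m)_∞`. -/
noncomputable def J (m : ℕ) (q : ℂ) : ℂ := poch (q ^ m) (q ^ m)

/-- `J_{a,m} = (q^a; q^m)_∞ (q^{m-a}; q^m)_∞ (q^m; q^m)_∞`. -/
noncomputable def Jam (a m : ℕ) (q : ℂ) : ℂ :=
  poch (q ^ a) (q ^ m) * poch (q ^ (m - a)) (q ^ m) * poch (q ^ m) (q ^ m)

/-- `ζ = e^{iπ/5}`, a primitive 10th root of unity. -/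
noncomputable def zeta10 : ℂ := Complex.exp (Real.pi * Complex.I / 5)

/-! ### Facts about ζ -/

lemma zeta10_pow_five : zeta10 ^ 5 = -1 := by
  rw [zeta10, ← Complex.exp_nat_mul]
  rw [show (5:ℕ) * ((Real.pi:ℂ) * Complex.I / 5) = Real.pi * Complex.I by push_cast; ring]
  exact Complex.exp_pi_mul_I

lemma zeta10_im : zeta10.im = Real.sin (Real.pi / 5) := by
  rw [zeta10, show (Real.pi:ℂ) * Complex.I / 5 = ((Real.pi/5 : ℝ):ℂ) * Complex.I by push_cast; ring,
    Complex.exp_ofReal_mul_I_im]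

lemma zeta10_im_pos : 0 < zeta10.im := by
  rw [zeta10_im]
  apply Real.sin_pos_of_pos_of_lt_pi <;> [positivity; nlinarith [Real.pi_pos]]

lemma zeta10_ne_one : zeta10 ≠ 1 := by
  intro h; have := zeta10_im_pos; rw [h] at this; simp at this

lemma zeta10_ne_neg_one : zeta10 ≠ -1 := by
  intro h; have := zeta10_im_pos; rw [h] at this; simp at this

lemma zeta10_phi : zeta10^4 - zeta10^3 + zeta10^2 - zeta10 + 1 = 0 := by
  have h5 := zeta10_pow_five
  have hne : zeta10 + 1 ≠ 0 := by
    intro h; apply zeta10_ne_neg_one; linear_combination h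
  have : (zeta10 + 1) * (zeta10^4 - zeta10^3 + zeta10^2 - zeta10 + 1) = 0 := by
    linear_combination h5
  rcases mul_eq_zero.1 this with h | h
  · exact absurd h hne
  · exact h

lemma zeta10_inv : zeta10⁻¹ = -zeta10^4 :=
  inv_eq_of_mul_eq_one_left (by linear_combination -zeta10_pow_five)

lemma zeta10_abs : ‖zeta10‖ = 1 := by
  rw [zeta10, Complex.norm_exp]
  norm_num [Complex.div_re, Complex.mul_re]

lemma neg_zeta10_pow4_norm : ‖-zeta10^4‖ = 1 := by
  rw [← zeta10_inv]
  rw [norm_inv, zeta10_abs]; norm_num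

lemma neg_zeta10_pow4_ne_one : -zeta10^4 ≠ (1:ℂ) := by
  rw [← zeta10_inv]
  intro h
  exact zeta10_ne_one (inv_eq_one.mp h)

/-! ### The key algebraic identity -/


lemma key_identity0 (z x y s : ℂ) (hphi : z^4 - z^3 + z^2 - z + 1 = 0) (hxy : x * y = 1)
    (d1 : 1 - z * x ≠ 0) (d2 : 1 + z^4 * x ≠ 0)
    (d1' : 1 - z * y ≠ 0) (d2' : 1 + z^4 * y ≠ 0)
    (d3 : 1 + x^5 ≠ 0) (d3' : 1 + y^5 ≠ 0) :
    (1 - z) * (1 + z^4) * s / ((1 - z*x) * (1 + z^4*x))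
      + (1 - z) * (1 + z^4) * (s * y^2) / ((1 - z*y) * (1 + z^4*y))
    = (s / (1 + x^5) + s * y^2 / (1 + y^5)) * 2
      + (z^2 - z^3) * ((s * (x-1) / (1 + x^5) + s * y^2 * (y-1) / (1 + y^5)) * 2) := by
  field_simp
  linear_combination (s*((-1*y^5) + (1*y^7) + (-1*x^3) + (1*x^5) + (-2*z) + (-2*z*y^2) + (2*z*y^3) + (2*z*y^4) + (-2*z*y^5) + (2*z*x) + (2*z*x^2) + (-2*z*x^3) + (-2*z^2) + (4*z^2*y) + (-2*z^2*y^2) + (-1*z^2*y^5) + (2*z^2*y^6) + (-1*z^2*y^7) + (-1*z^2*x^3) + (2*z^2*x^4) + (-1*z^2*x^5) + (2*z^4) + (2*z^4*y^2) + (-2*z^4*y^3) + (-2*z^4*y^4) + (1*z^4*y^5) + (1*z^4*y^7) + (-2*z^4*x) + (-2*z^4*x^2) + (1*z^4*x^3) + (1*z^4*x^5) + (2*z^5) + (-4*z^5*y) + (2*z^5*y^2) + (2*z^5*y^5) + (-2*z^5*y^6) + (2*z^5*x^3) + (-2*z^5*x^4) + (2*z^6) + (-4*z^6*y) + (2*z^6*y^2)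 + (1*z^6*y^5) + (-2*z^6*y^6) + (1*z^6*y^7) + (1*z^6*x^3) + (-2*z^6*x^4) + (1*z^6*x^5) + (-2*z^8) + (4*z^8*y) + (-2*z^8*y^2) + (-2*z^8*y^5) + (2*z^8*y^6) + (-2*z^8*x^3) + (2*z^8*x^4) + (-2*z^9) + (-2*z^9*y^2) + (2*z^9*y^3) + (2*z^9*y^4) + (-2*z^9*y^5) + (2*z^9*x) + (2*z^9*x^2) + (-2*z^9*x^3)))*hphi + (s*((1) + (1*y^2) + (1*x*y) + (1*x*y^3) + (1*x^2*y^2) + (1*x^2*y^4) + (-1*x^3) + (1*x^3*y^3) + (1*x^3*y^5) + (-1*x^4*y) + (1*x^4*y^4) + (1*x^4*y^6) + (-1*z) + (-1*z*y) + (-1*z*y^2) + (2*z*y^4) + (-1*z*y^6) + (-1*z*x*y) + (-2*z*x*y^2) + (-1*z*x*y^3) + (2*z*x^2) + (-1*z*x^2*y^2) + (-2*z*x^2*y^3) + (-1*z*x^2*y^4) + (-1*z*x^3) + (2*z*x^3*y) + (-1*z*x^3*y^3) + (-2*z*x^3*y^4) + (-1*z*x^3*y^5) + (-1*z*x^4*y)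 + (2*z*x^4*y^2) + (-1*z*x^4*y^4) + (-2*z*x^4*y^5) + (-1*z*x^4*y^6) + (1*z*x^5*y) + (-1*z*x^5*y^6) + (-2*z^2) + (3*z^2*y) + (-2*z^2*y^2) + (-2*z^2*y^4) + (-2*z^2*y^5) + (1*z^2*y^6) + (2*z^2*x*y^2) + (-2*z^2*x^2) + (2*z^2*x^2*y^3) + (-2*z^2*x^3*y) + (2*z^2*x^3*y^4) + (2*z^2*x^4) + (-2*z^2*x^4*y^2) + (2*z^2*x^4*y^5) + (1*z^2*x^5*y) + (-2*z^2*x^5*y^2) + (1*z^2*x^5*y^6) + (2*z^3) + (-2*z^3*y) + (2*z^3*y^2) + (2*z^3*y^3) + (2*z^3*y^5) + (2*z^3*x) + (2*z^3*x*y^4) + (2*z^3*x^2*y) + (2*z^3*x^3*y^2) + (-2*z^3*x^4) + (2*z^3*x^4*y^3) + (-2*z^3*x^5*y) + (2*z^3*x^5*y^2) + (1*z^4) + (3*z^4*y) + (1*z^4*y^2) + (-4*z^4*y^3) + (-2*z^4*y^4) + (1*z^4*y^6) + (-4*z^4*x) + (1*z^4*x*y) + (2*z^4*x*y^2) + (1*z^4*x*y^3)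 + (-2*z^4*x*y^4) + (-2*z^4*x*y^5) + (-2*z^4*x^2) + (-2*z^4*x^2*y) + (1*z^4*x^2*y^2) + (2*z^4*x^2*y^3) + (1*z^4*x^2*y^4) + (1*z^4*x^3) + (-2*z^4*x^3*y) + (-2*z^4*x^3*y^2) + (1*z^4*x^3*y^3) + (2*z^4*x^3*y^4) + (1*z^4*x^3*y^5) + (2*z^4*x^4) + (1*z^4*x^4*y) + (-2*z^4*x^4*y^2) + (-2*z^4*x^4*y^3) + (1*z^4*x^4*y^4) + (2*z^4*x^4*y^5) + (1*z^4*x^4*y^6) + (1*z^4*x^5*y) + (-2*z^4*x^5*y^3) + (1*z^4*x^5*y^6) + (1*z^5) + (-6*z^5*y) + (4*z^5*y^3) + (2*z^5*y^4) + (1*z^5*y^5) + (-2*z^5*y^6) + (4*z^5*x) + (-1*z^5*x*y) + (-4*z^5*x*y^2) + (-2*z^5*x*y^3) + (2*z^5*x*y^4) + (2*z^5*x*y^5) + (-1*z^5*x*y^6) + (2*z^5*x^2) + (2*z^5*x^2*y) + (-2*z^5*x^2*y^2) + (-4*z^5*x^2*y^3) + (-2*z^5*x^2*y^4) + (2*z^5*x^3*y)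 + (2*z^5*x^3*y^2) + (-2*z^5*x^3*y^3) + (-4*z^5*x^3*y^4) + (-2*z^5*x^3*y^5) + (-4*z^5*x^4) + (2*z^5*x^4*y^2) + (2*z^5*x^4*y^3) + (-2*z^5*x^4*y^4) + (-4*z^5*x^4*y^5) + (-2*z^5*x^4*y^6) + (1*z^5*x^5) + (-2*z^5*x^5*y) + (2*z^5*x^5*y^2) + (2*z^5*x^5*y^3) + (-1*z^5*x^5*y^5) + (-2*z^5*x^5*y^6) + (1*z^5*x^6*y) + (-1*z^5*x^6*y^6) + (1*z^6*y) + (-1*z^6*y^2) + (-4*z^6*y^3) + (-1*z^6*y^5) + (-1*z^6*y^6) + (-4*z^6*x) + (2*z^6*x*y) + (1*z^6*x*y^3) + (-2*z^6*x*y^4) + (-2*z^6*x*y^5) + (1*z^6*x*y^6) + (-2*z^6*x^2*y) + (1*z^6*x^2*y^2) + (2*z^6*x^2*y^3) + (1*z^6*x^2*y^4) + (-1*z^6*x^3) + (-2*z^6*x^3*y^2) + (1*z^6*x^3*y^3) + (2*z^6*x^3*y^4) + (1*z^6*x^3*y^5) + (2*z^6*x^4) + (-1*z^6*x^4*y) +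 (-2*z^6*x^4*y^3) + (1*z^6*x^4*y^4) + (2*z^6*x^4*y^5) + (1*z^6*x^4*y^6) + (1*z^6*x^5) + (1*z^6*x^5*y) + (-2*z^6*x^5*y^2) + (-2*z^6*x^5*y^3) + (1*z^6*x^5*y^5) + (1*z^6*x^5*y^6) + (1*z^6*x^6*y) + (-2*z^6*x^6*y^2) + (1*z^6*x^6*y^6) + (-2*z^7) + (2*z^7*y) + (4*z^7*y^3) + (2*z^7*y^4) + (-2*z^7*y^5) + (2*z^7*y^6) + (4*z^7*x) + (2*z^7*x*y^2) + (2*z^7*x*y^3) + (4*z^7*x*y^5) + (2*z^7*x^2) + (2*z^7*x^2*y^2) + (2*z^7*x^2*y^4) + (-2*z^7*x^3) + (2*z^7*x^3*y) + (2*z^7*x^3*y^3) + (-2*z^7*x^4*y) + (2*z^7*x^4*y^2) + (2*z^7*x^4*y^4) + (-2*z^7*x^5) + (-2*z^7*x^5*y^2) + (4*z^7*x^5*y^3) + (-2*z^7*x^6*y) + (2*z^7*x^6*y^2) + (3*z^8*y) + (-2*z^8*y^2) + (-2*z^8*y^3) + (-4*z^8*y^4) + (1*z^8*y^6) + (-2*z^8*x)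 + (-2*z^8*x*y) + (2*z^8*x*y^2) + (-4*z^8*x*y^3) + (-2*z^8*x*y^5) + (-2*z^8*x*y^6) + (-4*z^8*x^2) + (-2*z^8*x^2*y^2) + (2*z^8*x^2*y^3) + (-2*z^8*x^2*y^4) + (-2*z^8*x^2*y^5) + (-2*z^8*x^3*y) + (-2*z^8*x^3*y^3) + (2*z^8*x^3*y^4) + (2*z^8*x^4) + (-2*z^8*x^4*y^2) + (-2*z^8*x^4*y^4) + (2*z^8*x^4*y^5) + (2*z^8*x^5) + (1*z^8*x^5*y) + (-2*z^8*x^5*y^3) + (-2*z^8*x^5*y^4) + (1*z^8*x^5*y^6) + (2*z^8*x^6*y) + (-2*z^8*x^6*y^3) + (-3*z^9*y) + (1*z^9*y^2) + (2*z^9*y^3) + (2*z^9*y^4) + (1*z^9*y^5) + (-1*z^9*y^6) + (2*z^9*x) + (-2*z^9*x*y^2) + (1*z^9*x*y^3) + (2*z^9*x*y^4) + (1*z^9*x*y^6) + (2*z^9*x^2) + (2*z^9*x^2*y) + (-1*z^9*x^2*y^2) + (-2*z^9*x^2*y^3) + (-1*z^9*x^2*y^4) + (2*z^9*x^2*y^5)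 + (1*z^9*x^3) + (2*z^9*x^3*y^2) + (-1*z^9*x^3*y^3) + (-2*z^9*x^3*y^4) + (-1*z^9*x^3*y^5) + (-2*z^9*x^4) + (1*z^9*x^4*y) + (2*z^9*x^4*y^3) + (-1*z^9*x^4*y^4) + (-2*z^9*x^4*y^5) + (-1*z^9*x^4*y^6) + (-1*z^9*x^5) + (-1*z^9*x^5*y) + (2*z^9*x^5*y^2) + (2*z^9*x^5*y^4) + (-1*z^9*x^5*y^5) + (-1*z^9*x^5*y^6) + (-1*z^9*x^6*y) + (2*z^9*x^6*y^3) + (-1*z^9*x^6*y^6) + (2*z^10) + (1*z^10*y^2) + (-2*z^10*y^3) + (-2*z^10*y^4) + (1*z^10*y^5) + (-2*z^10*x) + (-1*z^10*x*y^3) + (-2*z^10*x*y^5) + (-1*z^10*x*y^6) + (-2*z^10*x^2) + (1*z^10*x^2*y^2) + (1*z^10*x^2*y^4) + (1*z^10*x^3) + (-2*z^10*x^3*y) + (1*z^10*x^3*y^3) + (1*z^10*x^3*y^5) + (1*z^10*x^4*y) + (-2*z^10*x^4*y^2) + (1*z^10*x^4*y^4) + (1*z^10*x^4*y^6) + (1*z^10*x^5)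 + (-2*z^10*x^5*y^3) + (1*z^10*x^5*y^5) + (1*z^10*x^6*y) + (-2*z^10*x^6*y^3) + (1*z^10*x^6*y^6) + (-4*z^11*y) + (2*z^11*y^3) + (2*z^11*y^4) + (-2*z^11*y^6) + (2*z^11*x) + (2*z^11*x*y) + (-2*z^11*x*y^2) + (2*z^11*x*y^3) + (2*z^11*x*y^4) + (2*z^11*x*y^6) + (2*z^11*x^2) + (2*z^11*x^2*y) + (2*z^11*x^2*y^5) + (2*z^11*x^3*y^2) + (-2*z^11*x^4) + (2*z^11*x^4*y^3) + (-2*z^11*x^5*y) + (2*z^11*x^5*y^4) + (-2*z^11*x^6*y^2) + (2*z^11*x^6*y^3) + (4*z^12*y) + (-2*z^12*y^3) + (-2*z^12*y^4) + (2*z^12*y^6) + (-2*z^12*x) + (2*z^12*x*y^2) + (-4*z^12*x*y^4) + (-2*z^12*x^2) + (-4*z^12*x^2*y) + (-2*z^12*x^2*y^5) + (-2*z^12*x^2*y^6) + (-2*z^12*x^3*y^2) + (2*z^12*x^4) + (-2*z^12*x^4*y^3) + (2*z^12*x^5*y) + (-2*z^12*x^5*y^4) + (2*z^12*x^6*y^2)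 + (-2*z^12*x^6*y^4) + (-2*z^13) + (-2*z^13*y^2) + (2*z^13*y^3) + (2*z^13*y^4) + (-2*z^13*y^5) + (2*z^13*x) + (-2*z^13*x*y) + (-2*z^13*x*y^3) + (2*z^13*x*y^4) + (2*z^13*x*y^5) + (-2*z^13*x*y^6) + (2*z^13*x^2) + (2*z^13*x^2*y) + (2*z^13*x^2*y^6) + (-2*z^13*x^3) + (2*z^13*x^3*y) + (-2*z^13*x^4*y) + (2*z^13*x^4*y^2) + (-2*z^13*x^5*y^2) + (2*z^13*x^5*y^3) + (-2*z^13*x^6*y^3) + (2*z^13*x^6*y^4)))*hxy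

lemma key_identity (z x y s p : ℂ) (hphi : z^4 - z^3 + z^2 - z + 1 = 0) (hxy : x * y = 1)
    (d1 : 1 - z * x ≠ 0) (d2 : 1 - -z^4 * x ≠ 0)
    (d1' : 1 - z * y ≠ 0) (d2' : 1 - -z^4 * y ≠ 0)
    (d3 : 1 + x^5 ≠ 0) (d3' : 1 + y^5 ≠ 0) :
    (1 - z) * (1 - -z^4) * s * p / ((1 - z*x) * (1 - -z^4*x))
      + (1 - z) * (1 - -z^4) * s * (p * y^2) / ((1 - z*y) * (1 - -z^4*y))
    = (2 * (s * p / (1 + x^5)) + (z^2 - z^3) * (2 * (s * p * (x-1) / (1 + x^5))))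
      + (2 * (s * (p * y^2) / (1 + y^5))
          + (z^2 - z^3) * (2 * (s * (p * y^2) * (y-1) / (1 + y^5)))) := by
  have h2 : 1 + z^4 * x ≠ 0 := fun h => d2 (by rw [← h]; ring)
  have h2' : 1 + z^4 * y ≠ 0 := fun h => d2' (by rw [← h]; ring)
  have e1 : (1 : ℂ) - -z^4*x = 1 + z^4*x := by ring
  have e2 : (1 : ℂ) - -z^4*y = 1 + z^4*y := by ring
  rw [e1, e2]
  linear_combination key_identity0 z x y (s*p) hphi hxy d1 h2 d1' h2' d3 d3'

/-! ### Nonvanishing of denominators -/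


lemma denom_ne {q : ℂ} (hq0 : q ≠ 0) (hq1 : ‖q‖ < 1) {u : ℂ} (hu : ‖u‖ = 1) (hu1 : u ≠ 1)
    (m : ℤ) : 1 - u * q ^ m ≠ 0 := by
  intro h
  have h' : u * q ^ m = 1 := by linear_combination -h
  have hn : ‖q‖ ^ m = 1 := by
    have := congrArg norm h'
    rwa [norm_mul, hu, one_mul, norm_zpow, norm_one] at this
  have hr0 : (0:ℝ) < ‖q‖ := norm_pos_iff.mpr hq0
  have hm : m = 0 := by
    have := zpow_right_injective₀ hr0 (ne_of_lt hq1) (a := ‖q‖)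
    have h0 : ‖q‖ ^ m = ‖q‖ ^ (0:ℤ) := by rw [zpow_zero]; exact hn
    exact this h0
  rw [hm, zpow_zero, mul_one] at h'
  exact hu1 h'

/-! ### Summability -/

lemma summable_of_bound {f : ℤ → ℂ} {C r : ℝ} (hr0 : 0 ≤ r) (hr1 : r < 1)
    (h : ∀ n : ℤ, ‖f n‖ ≤ C * r ^ n.natAbs) : Summable f := by
  refine Summable.of_norm (Summable.of_nonneg_of_le (fun n => norm_nonneg _) h ?_)
  refine Summable.of_nat_of_neg ?_ ?_
  · simpa using (summable_geometric_of_lt_one hr0 hr1).mul_left C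
  · simpa using (summable_geometric_of_lt_one hr0 hr1).mul_left C

lemma lb_pos {q : ℂ} (hq0 : q ≠ 0) (hq1 : ‖q‖ < 1) {u : ℂ} (hu : ‖u‖ = 1) {m : ℤ}
    (hm : 1 ≤ m) : 1 - ‖q‖ ≤ ‖1 - u * q ^ m‖ := by
  have hr0 : (0:ℝ) < ‖q‖ := norm_pos_iff.mpr hq0
  have h1 : ‖u * q ^ m‖ = ‖q‖ ^ m := by rw [norm_mul, hu, one_mul, norm_zpow]
  have h2 : ‖q‖ ^ m ≤ ‖q‖ := by
    have := zpow_le_zpow_right_of_le_one₀ hr0 hq1.le hm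
    simpa using this
  calc 1 - ‖q‖ ≤ 1 - ‖u * q ^ m‖ := by rw [h1]; linarith
    _ ≤ ‖1 - u * q ^ m‖ := by
        have := norm_sub_norm_le (1:ℂ) (u * q ^ m)
        simpa using this

lemma lb_neg {q : ℂ} (hq0 : q ≠ 0) (hq1 : ‖q‖ < 1) {u : ℂ} (hu : ‖u‖ = 1) {m : ℤ}
    (hm : m ≤ -1) : (1 - ‖q‖) * ‖q‖ ^ m ≤ ‖1 - u * q ^ m‖ := by
  have hr0 : (0:ℝ) < ‖q‖ := norm_pos_iff.mpr hq0
  have h3 : (1:ℝ) ≤ ‖q‖ ^ (m+1) := one_le_zpow_of_nonpos₀ hr0 hq1.le (by linarith)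
  rw [zpow_add_one₀ (ne_of_gt hr0)] at h3
  have h1 : ‖u * q ^ m‖ = ‖q‖ ^ m := by rw [norm_mul, hu, one_mul, norm_zpow]
  calc (1 - ‖q‖) * ‖q‖ ^ m = ‖q‖ ^ m - ‖q‖ ^ m * ‖q‖ := by ring
    _ ≤ ‖q‖ ^ m - 1 := by linarith
    _ ≤ ‖1 - u * q ^ m‖ := by
        have := norm_sub_norm_le (u * q ^ m) (1:ℂ)
        rw [norm_sub_rev] at this
        simpa [h1, hu] using this

lemma summable_A {q : ℂ} (hq0 : q ≠ 0) (hq1 : ‖q‖ < 1) :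
    Summable (fun n : ℤ => (-1:ℂ)^n * q^(n^2+2*n) / (1 + q^(10*n))) := by
  have hr0 : (0:ℝ) < ‖q‖ := norm_pos_iff.mpr hq0
  have h1r : (0:ℝ) < 1 - ‖q‖ := by linarith
  have hrne : ‖q‖ ≠ 0 := ne_of_gt hr0
  have habs1 : ‖(-1:ℂ)‖ = 1 := by norm_num
  apply summable_of_bound (C := (1-‖q‖)⁻¹) hr0.le hq1
  intro n
  have hden : (1:ℂ) + q^(10*n) = 1 - (-1)*q^(10*n) := by ring
  have hnorm : ‖(-1:ℂ)^n * q^(n^2+2*n) / (1+q^(10*n))‖ = ‖q‖^(n^2+2*n) / ‖1+q^(10*n)‖ := by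
    rw [norm_div, norm_mul, norm_zpow, norm_zpow, norm_neg, norm_one, one_zpow, one_mul]
  rw [hnorm, ← zpow_natCast ‖q‖ n.natAbs]
  rcases lt_trichotomy n 0 with hn | hn | hn
  · have hlb : (1-‖q‖) * ‖q‖^(10*n) ≤ ‖1+q^(10*n)‖ := by
      rw [hden]; exact lb_neg hq0 hq1 habs1 (by omega : 10*n ≤ -1)
    have hpos : (0:ℝ) < (1-‖q‖)*‖q‖^(10*n) := mul_pos h1r (zpow_pos hr0 _)
    have hnum : ‖q‖^(n^2+2*n) ≤ ‖q‖^(10*n) * ‖q‖^(-n) := by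
      rw [← zpow_add₀ hrne]
      exact zpow_le_zpow_right_of_le_one₀ hr0 hq1.le (by nlinarith)
    have hcast : ((n.natAbs : ℕ) : ℤ) = -n := by omega
    rw [hcast]
    calc ‖q‖^(n^2+2*n) / ‖1+q^(10*n)‖
        ≤ (‖q‖^(10*n) * ‖q‖^(-n)) / ((1-‖q‖) * ‖q‖^(10*n)) :=
          div_le_div₀ (by positivity) hnum hpos hlb
      _ = ‖q‖^(-n) / (1-‖q‖) := by
          rw [mul_comm (1-‖q‖) _, mul_div_mul_left _ _ (zpow_ne_zero _ hrne)]
      _ = (1-‖q‖)⁻¹ * ‖q‖^(-n) := by rw [div_eq_inv_mul]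
  · subst hn
    norm_num
    calc (1:ℝ)/2 ≤ 1 := by norm_num
      _ ≤ (1-‖q‖)⁻¹ := one_le_inv_iff₀.mpr ⟨h1r, by linarith⟩
  · have hlb : 1-‖q‖ ≤ ‖1+q^(10*n)‖ := by
      rw [hden]; exact lb_pos hq0 hq1 habs1 (by omega : 1 ≤ 10*n)
    have hnum : ‖q‖^(n^2+2*n) ≤ ‖q‖^(n) := by
      exact zpow_le_zpow_right_of_le_one₀ hr0 hq1.le (by nlinarith)
    have hcast : ((n.natAbs : ℕ) : ℤ) = n := by omega
    rw [hcast]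
    calc ‖q‖^(n^2+2*n) / ‖1+q^(10*n)‖ ≤ ‖q‖^(n) / (1-‖q‖) :=
          div_le_div₀ (by positivity) hnum h1r hlb
      _ = (1-‖q‖)⁻¹ * ‖q‖^(n) := by rw [div_eq_inv_mul]

lemma cancel_aux1 (a b c : ℝ) (hb : b ≠ 0) : (2*(b*a))/(c*b) = 2*c⁻¹*a := by
  rw [show (2*(b*a)) = (2*a)*b by ring, mul_div_mul_right _ _ hb]; ring


lemma summable_B {q : ℂ} (hq0 : q ≠ 0) (hq1 : ‖q‖ < 1) :
    Summable (fun n : ℤ => (-1:ℂ)^n * q^(n^2+2*n) * (q^(2*n) - 1) / (1 + q^(10*n))) := by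
  have hr0 : (0:ℝ) < ‖q‖ := norm_pos_iff.mpr hq0
  have h1r : (0:ℝ) < 1 - ‖q‖ := by linarith
  have hrne : ‖q‖ ≠ 0 := ne_of_gt hr0
  have habs1 : ‖(-1:ℂ)‖ = 1 := by norm_num
  apply summable_of_bound (C := 2*(1-‖q‖)⁻¹) hr0.le hq1
  intro n
  have hden : (1:ℂ) + q^(10*n) = 1 - (-1)*q^(10*n) := by ring
  have hnorm : ‖(-1:ℂ)^n * q^(n^2+2*n) * (q^(2*n) - 1) / (1+q^(10*n))‖
      = ‖q‖^(n^2+2*n) * ‖q^(2*n) - 1‖ / ‖1+q^(10*n)‖ := by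
    rw [norm_div, norm_mul, norm_mul, norm_zpow, norm_zpow, norm_neg, norm_one, one_zpow, one_mul]
  rw [hnorm, ← zpow_natCast ‖q‖ n.natAbs]
  rcases lt_trichotomy n 0 with hn | hn | hn
  · have hcast : ((n.natAbs : ℕ) : ℤ) = -n := by omega
    rw [hcast]
    have hlb : (1-‖q‖) * ‖q‖^(10*n) ≤ ‖1+q^(10*n)‖ := by
      rw [hden]; exact lb_neg hq0 hq1 habs1 (by omega : 10*n ≤ -1)
    have hpos : (0:ℝ) < (1-‖q‖)*‖q‖^(10*n) := mul_pos h1r (zpow_pos hr0 _)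
    have hfac : ‖q^(2*n) - 1‖ ≤ 2*‖q‖^(2*n) := by
      have h1 : ‖q^(2*n) - (1:ℂ)‖ ≤ ‖q^(2*n)‖ + ‖(1:ℂ)‖ := norm_sub_le _ _
      have h2 : (1:ℝ) ≤ ‖q‖^(2*n) := one_le_zpow_of_nonpos₀ hr0 hq1.le (by omega)
      rw [norm_zpow, norm_one] at h1
      linarith
    have hmerge : ‖q‖^(n^2+2*n) * (2*‖q‖^(2*n)) ≤ 2*(‖q‖^(10*n)*‖q‖^(-n)) := by
      have : ‖q‖^(n^2+2*n) * ‖q‖^(2*n) ≤ ‖q‖^(10*n)*‖q‖^(-n) := by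
        rw [← zpow_add₀ hrne, ← zpow_add₀ hrne]
        exact zpow_le_zpow_right_of_le_one₀ hr0 hq1.le (by nlinarith)
      linarith
    have hnum : ‖q‖^(n^2+2*n) * ‖q^(2*n) - 1‖ ≤ 2*(‖q‖^(10*n)*‖q‖^(-n)) := by
      have hp : (0:ℝ) < ‖q‖^(n^2+2*n) := zpow_pos hr0 _
      nlinarith [norm_nonneg (q^(2*n) - (1:ℂ))]
    calc ‖q‖^(n^2+2*n) * ‖q^(2*n) - 1‖ / ‖1+q^(10*n)‖
        ≤ (2*(‖q‖^(10*n)*‖q‖^(-n))) / ((1-‖q‖)*‖q‖^(10*n)) :=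
          div_le_div₀ (by positivity) hnum hpos hlb
      _ = 2*(1-‖q‖)⁻¹*‖q‖^(-n) := cancel_aux1 _ _ _ (zpow_ne_zero _ hrne)
  · subst hn
    norm_num
    exact le_of_lt hq1
  · have hcast : ((n.natAbs : ℕ) : ℤ) = n := by omega
    rw [hcast]
    have hlb : 1-‖q‖ ≤ ‖1+q^(10*n)‖ := by
      rw [hden]; exact lb_pos hq0 hq1 habs1 (by omega : 1 ≤ 10*n)
    have hfac : ‖q^(2*n) - 1‖ ≤ 2 := by
      have h1 : ‖q^(2*n) - (1:ℂ)‖ ≤ ‖q^(2*n)‖ + ‖(1:ℂ)‖ := norm_sub_le _ _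
      have h2 : ‖q‖^(2*n) ≤ 1 := zpow_le_one₀ hr0 hq1.le (by omega)
      rw [norm_zpow, norm_one] at h1
      linarith
    have hnum : ‖q‖^(n^2+2*n) * ‖q^(2*n) - 1‖ ≤ 2*‖q‖^(n) := by
      have h3 : ‖q‖^(n^2+2*n) ≤ ‖q‖^(n) :=
        zpow_le_zpow_right_of_le_one₀ hr0 hq1.le (by nlinarith)
      have hp : (0:ℝ) < ‖q‖^(n^2+2*n) := zpow_pos hr0 _
      nlinarith [norm_nonneg (q^(2*n) - (1:ℂ)), zpow_pos hr0 n]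
    calc ‖q‖^(n^2+2*n) * ‖q^(2*n) - 1‖ / ‖1+q^(10*n)‖
        ≤ (2*‖q‖^(n)) / (1-‖q‖) := div_le_div₀ (by positivity) hnum h1r hlb
      _ = 2*(1-‖q‖)⁻¹*‖q‖^(n) := by ring

lemma cancel_aux2 (a b c : ℝ) (hb : b ≠ 0) : (4*(b*b*a))/((c*b)*(c*b)) = 4/(c*c)*a := by
  rw [show (4*(b*b*a)) = (4*a)*(b*b) by ring, show ((c*b)*(c*b)) = (c*c)*(b*b) by ring,
    mul_div_mul_right _ _ (mul_ne_zero hb hb)]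
  ring

lemma summable_F {q : ℂ} (hq0 : q ≠ 0) (hq1 : ‖q‖ < 1) {u₁ u₂ : ℂ}
    (h1 : ‖u₁‖ = 1) (h2 : ‖u₂‖ = 1) (hu1 : u₁ ≠ 1) (hu2 : u₂ ≠ 1) :
    Summable (fun n : ℤ =>
      (1 - u₁) * (1 - u₂) * (-1:ℂ)^n * q^(n^2+2*n) / ((1 - u₁*q^(2*n)) * (1 - u₂*q^(2*n)))) := by
  have hr0 : (0:ℝ) < ‖q‖ := norm_pos_iff.mpr hq0
  have h1r : (0:ℝ) < 1 - ‖q‖ := by linarith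
  have hrne : ‖q‖ ≠ 0 := ne_of_gt hr0
  apply summable_of_bound (C := 4/((1-‖q‖)*(1-‖q‖))) hr0.le hq1
  intro n
  have hK1 : ‖(1:ℂ) - u₁‖ ≤ 2 := (norm_sub_le _ _).trans (by rw [norm_one, h1]; norm_num)
  have hK2 : ‖(1:ℂ) - u₂‖ ≤ 2 := (norm_sub_le _ _).trans (by rw [norm_one, h2]; norm_num)
  have hnorm : ‖(1 - u₁) * (1 - u₂) * (-1:ℂ)^n * q^(n^2+2*n)
        / ((1 - u₁*q^(2*n)) * (1 - u₂*q^(2*n)))‖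
      = ‖1 - u₁‖ * ‖1 - u₂‖ * ‖q‖^(n^2+2*n) / (‖1 - u₁*q^(2*n)‖ * ‖1 - u₂*q^(2*n)‖) := by
    simp only [norm_div, norm_mul, norm_zpow, norm_neg, norm_one, one_zpow, mul_one]
  rw [hnorm, ← zpow_natCast ‖q‖ n.natAbs]
  rcases lt_trichotomy n 0 with hn | hn | hn
  · have hcast : ((n.natAbs : ℕ) : ℤ) = -n := by omega
    rw [hcast]
    have hlb1 : (1-‖q‖) * ‖q‖^(2*n) ≤ ‖1 - u₁*q^(2*n)‖ := lb_neg hq0 hq1 h1 (by omega)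
    have hlb2 : (1-‖q‖) * ‖q‖^(2*n) ≤ ‖1 - u₂*q^(2*n)‖ := lb_neg hq0 hq1 h2 (by omega)
    have hpos : (0:ℝ) < (1-‖q‖)*‖q‖^(2*n) := mul_pos h1r (zpow_pos hr0 _)
    have hlb : ((1-‖q‖)*‖q‖^(2*n)) * ((1-‖q‖)*‖q‖^(2*n))
        ≤ ‖1 - u₁*q^(2*n)‖ * ‖1 - u₂*q^(2*n)‖ :=
      mul_le_mul hlb1 hlb2 hpos.le (norm_nonneg _)
    have hmerge : ‖q‖^(n^2+2*n) ≤ ‖q‖^(2*n)*‖q‖^(2*n)*‖q‖^(-n) := by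
      rw [← zpow_add₀ hrne, ← zpow_add₀ hrne]
      exact zpow_le_zpow_right_of_le_one₀ hr0 hq1.le (by nlinarith)
    have hnum : ‖1 - u₁‖ * ‖1 - u₂‖ * ‖q‖^(n^2+2*n)
        ≤ 4*(‖q‖^(2*n)*‖q‖^(2*n)*‖q‖^(-n)) := by
      have p1 : (0:ℝ) ≤ ‖(1:ℂ) - u₁‖ := norm_nonneg _
      have p2 : (0:ℝ) ≤ ‖(1:ℂ) - u₂‖ := norm_nonneg _
      have p3 : (0:ℝ) < ‖q‖^(n^2+2*n) := zpow_pos hr0 _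
      have h12 : ‖(1:ℂ) - u₁‖ * ‖(1:ℂ) - u₂‖ ≤ 4 := by nlinarith
      nlinarith [mul_le_mul_of_nonneg_right h12 p3.le, hmerge]
    calc ‖1 - u₁‖ * ‖1 - u₂‖ * ‖q‖^(n^2+2*n) / (‖1 - u₁*q^(2*n)‖ * ‖1 - u₂*q^(2*n)‖)
        ≤ (4*(‖q‖^(2*n)*‖q‖^(2*n)*‖q‖^(-n)))
            / (((1-‖q‖)*‖q‖^(2*n)) * ((1-‖q‖)*‖q‖^(2*n))) :=
          div_le_div₀ (by positivity) hnum (by positivity) hlb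
      _ = 4/((1-‖q‖)*(1-‖q‖))*‖q‖^(-n) := cancel_aux2 _ _ _ (zpow_ne_zero _ hrne)
  · subst hn
    have hne : (1 - u₁) * (1 - u₂) ≠ (0:ℂ) :=
      mul_ne_zero (sub_ne_zero.mpr (Ne.symm hu1)) (sub_ne_zero.mpr (Ne.symm hu2))
    have hnn : ‖(1:ℂ) - u₁‖ * ‖(1:ℂ) - u₂‖ ≠ 0 := by
      rw [← norm_mul]; exact norm_ne_zero_iff.mpr hne
    norm_num
    have hnn' : ‖(1:ℂ) - u₁‖ * ‖(1:ℂ) - u₂‖ ≠ 0 := by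
      simpa using hnn
    have h1r' : (0:ℝ) < 1 - ‖q‖ := by exact h1r
    have hq1' : ‖q‖ < 1 := by exact hq1
    have hr0' : (0:ℝ) < ‖q‖ := by exact hr0
    rw [div_self hnn', le_div_iff₀ (mul_pos h1r' h1r')]
    nlinarith
  · have hcast : ((n.natAbs : ℕ) : ℤ) = n := by omega
    rw [hcast]
    have hlb1 : (1-‖q‖) ≤ ‖1 - u₁*q^(2*n)‖ := lb_pos hq0 hq1 h1 (by omega)
    have hlb2 : (1-‖q‖) ≤ ‖1 - u₂*q^(2*n)‖ := lb_pos hq0 hq1 h2 (by omega)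
    have hlb : (1-‖q‖) * (1-‖q‖) ≤ ‖1 - u₁*q^(2*n)‖ * ‖1 - u₂*q^(2*n)‖ :=
      mul_le_mul hlb1 hlb2 h1r.le (h1r.le.trans hlb1)
    have hmerge : ‖q‖^(n^2+2*n) ≤ ‖q‖^(n) :=
      zpow_le_zpow_right_of_le_one₀ hr0 hq1.le (by nlinarith)
    have hnum : ‖1 - u₁‖ * ‖1 - u₂‖ * ‖q‖^(n^2+2*n) ≤ 4*‖q‖^(n) := by
      have p1 : (0:ℝ) ≤ ‖(1:ℂ) - u₁‖ := norm_nonneg _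
      have p2 : (0:ℝ) ≤ ‖(1:ℂ) - u₂‖ := norm_nonneg _
      have p3 : (0:ℝ) < ‖q‖^(n^2+2*n) := zpow_pos hr0 _
      have h12 : ‖(1:ℂ) - u₁‖ * ‖(1:ℂ) - u₂‖ ≤ 4 := by nlinarith
      nlinarith [mul_le_mul_of_nonneg_right h12 p3.le, hmerge]
    calc ‖1 - u₁‖ * ‖1 - u₂‖ * ‖q‖^(n^2+2*n) / (‖1 - u₁*q^(2*n)‖ * ‖1 - u₂*q^(2*n)‖)
        ≤ (4*‖q‖^(n)) / ((1-‖q‖)*(1-‖q‖)) :=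
          div_le_div₀ (by positivity) hnum (by positivity) hlb
      _ = 4/((1-‖q‖)*(1-‖q‖))*‖q‖^(n) := by ring

lemma one_add_ne {q : ℂ} (hq0 : q ≠ 0) (hq1 : ‖q‖ < 1) (m : ℤ) : (1:ℂ) + q^m ≠ 0 := by
  have h := denom_ne hq0 hq1 (u := -1) (by norm_num) (by norm_num) m
  intro hh; apply h; linear_combination hh

lemma combine (F A B : ℤ → ℂ) (c : ℂ) (sF : Summable F) (sA : Summable A) (sB : Summable B)
    (hkey : ∀ n : ℤ, F n + F (-n) = (2*A n + c*(2*B n)) + (2*A (-n) + c*(2*B (-n)))) :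
    ∑' n : ℤ, F n = 2*(∑' n : ℤ, A n) + c*(2*∑' n : ℤ, B n) := by
  set G : ℤ → ℂ := fun n => 2*A n + c*(2*B n) with hG
  have sG : Summable G := (sA.mul_left 2).add ((sB.mul_left 2).mul_left c)
  have sFn : Summable (fun n : ℤ => F (-n)) := sF.comp_injective neg_injective
  have sGn : Summable (fun n : ℤ => G (-n)) := sG.comp_injective neg_injective
  have h1 : ∑' n : ℤ, (F n + F (-n)) = ∑' n : ℤ, (G n + G (-n)) := tsum_congr (fun n => hkey n)
  rw [Summable.tsum_add sF sFn, Summable.tsum_add sG sGn] at h1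
  have eF : ∑' n : ℤ, F (-n) = ∑' n : ℤ, F n := by
    simpa using (Equiv.neg ℤ).tsum_eq F
  have eG : ∑' n : ℤ, G (-n) = ∑' n : ℤ, G n := by
    simpa using (Equiv.neg ℤ).tsum_eq G
  rw [eF, eG] at h1
  have hFG : ∑' n : ℤ, F n = ∑' n : ℤ, G n :=
    mul_left_cancel₀ two_ne_zero (by linear_combination h1)
  rw [hFG, hG]
  rw [Summable.tsum_add (sA.mul_left 2) ((sB.mul_left 2).mul_left c), tsum_mul_left, tsum_mul_left,
    tsum_mul_left]

theorem stmt_4 (q : ℂ) (hq0 : q ≠ 0) (hq1 : ‖q‖ < 1) :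
    (∑' n : ℤ, (1 - zeta10) * (1 - zeta10⁻¹) * (-1 : ℂ) ^ n * q ^ (n ^ 2 + 2 * n) /
        ((1 - zeta10 * q ^ (2 * n)) * (1 - zeta10⁻¹ * q ^ (2 * n)))) =
      2 * (∑' n : ℤ, (-1 : ℂ) ^ n * q ^ (n ^ 2 + 2 * n) / (1 + q ^ (10 * n)))
        + (zeta10 ^ 2 - zeta10 ^ 3) *
            (2 * ∑' n : ℤ,
              (-1 : ℂ) ^ n * q ^ (n ^ 2 + 2 * n) * (q ^ (2 * n) - 1) / (1 + q ^ (10 * n))) := by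
  have hq1' : ‖q‖ < 1 := by exact hq1
  have hzn : ‖zeta10‖ = 1 := by rw [zeta10_abs]
  rw [zeta10_inv]
  refine combine _ _ _ _
    (summable_F hq0 hq1' hzn neg_zeta10_pow4_norm zeta10_ne_one neg_zeta10_pow4_ne_one)
    (summable_A hq0 hq1') (summable_B hq0 hq1') ?_
  intro n

  have hxy : q^(2*n) * q^(2*(-n)) = 1 := by
    rw [← zpow_add₀ hq0, show 2*n + 2*(-n) = 0 by ring, zpow_zero]
  have r1 : (-1:ℂ)^(-n) = (-1:ℂ)^n := by rw [zpow_neg, ← inv_zpow, inv_neg, inv_one]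
  have r2 : q^((-n)^2 + 2*(-n)) = q^(n^2+2*n) * (q^(2*(-n)))^2 := by
    rw [← zpow_natCast (q^(2*(-n))) 2, ← zpow_mul, ← zpow_add₀ hq0]
    congr 1; ring
  have r4 : q^(10*n) = (q^(2*n))^5 := by
    rw [← zpow_natCast (q^(2*n)) 5, ← zpow_mul]; congr 1; ring
  have r5 : q^(10*(-n)) = (q^(2*(-n)))^5 := by
    rw [← zpow_natCast (q^(2*(-n))) 5, ← zpow_mul]; congr 1; ring
  have d1 : 1 - zeta10*q^(2*n) ≠ 0 := denom_ne hq0 hq1' hzn zeta10_ne_one (2*n)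
  have d2 : 1 - -zeta10^4*q^(2*n) ≠ 0 :=
    denom_ne hq0 hq1' neg_zeta10_pow4_norm neg_zeta10_pow4_ne_one (2*n)
  have d1' : 1 - zeta10*q^(2*(-n)) ≠ 0 := denom_ne hq0 hq1' hzn zeta10_ne_one (2*(-n))
  have d2' : 1 - -zeta10^4*q^(2*(-n)) ≠ 0 :=
    denom_ne hq0 hq1' neg_zeta10_pow4_norm neg_zeta10_pow4_ne_one (2*(-n))
  have d3 : 1 + (q^(2*n))^5 ≠ 0 := by rw [← r4]; exact one_add_ne hq0 hq1' (10*n)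
  have d3' : 1 + (q^(2*(-n)))^5 ≠ 0 := by rw [← r5]; exact one_add_ne hq0 hq1' (10*(-n))
  rw [r1, r2, r4, r5]
  exact key_identity zeta10 (q^(2*n)) (q^(2*(-n))) ((-1:ℂ)^n) (q^(n^2+2*n))
    zeta10_phi hxy d1 d2 d1' d2' d3 d3'
end

section
/- Let q be a complex number with 0 < |q| < 1. Then Σ_{n∈ℤ} (−1)^n q^{3n²+6n+1}/(1−q^{6n+2}) = (1−q³) · [ Σ_{n=0}^∞ (q^{12n²+12n+1}/(1−q^{12n+2})) · Σ_{m=0}^{4n+2} q^{3m} + Σ_{n=0}^∞ q^{12n²+36n+12}(1+q³)/((1−q^{12n+2})(1−q^{12n+8})) + Σ_{n=0}^∞ (q^{12n²+12n+2}/(1−q^{12n+4})) · Σ_{m=0}^{4n+2} q^{3m} + Σ_{n=0}^∞ q^{12n²+36n+15}(1+q³)/((1−q^{12n+4})(1−q^{12n+10})) ]. -/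
open scoped BigOperators

namespace Stmt12Aux

variable {q : ℂ}

lemma one_sub_pow_ne (hq1 : ‖q‖ < 1) {m : ℕ} (hm : 1 ≤ m) :
    1 - q ^ m ≠ 0 := by
  intro h
  have h1 : q ^ m = 1 := by linear_combination -h
  have h2 : ‖q‖ ^ m = 1 := by
    have := congrArg norm h1
    simpa [norm_pow] using this
  have hlt : ‖q‖ ^ m < 1 :=
    pow_lt_one₀ (norm_nonneg q) hq1 (by omega)
  linarith

/-- A generic summability helper. -/
lemma summable_helper {g : ℕ → ℂ} {C r : ℝ} (hr0 : 0 ≤ r) (hr : r < 1)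
    (h : ∀ k : ℕ, ‖g k‖ ≤ C * (((k : ℝ) + 1) * r ^ k)) : Summable g := by
  have h2 : Summable fun k : ℕ => ((k : ℝ)) ^ 1 * r ^ k :=
    summable_pow_mul_geometric_of_norm_lt_one 1
      (by rwa [Real.norm_eq_abs, abs_of_nonneg hr0])
  have h3 : Summable fun k : ℕ => r ^ k := summable_geometric_of_lt_one hr0 hr
  have h1 : Summable fun k : ℕ => ((k : ℝ) + 1) * r ^ k := by
    have := h2.add h3
    refine this.congr fun k => ?_
    ring
  exact Summable.of_norm_bounded (h1.mul_left C) h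

lemma denom_lb (hq1 : ‖q‖ < 1) {m : ℕ} (hm : 2 ≤ m) :
    1 - (‖q‖) ^ 2 ≤ ‖(1 : ℂ) - q ^ m‖ := by
  have h1 : ‖(1 : ℂ)‖ - ‖q ^ m‖ ≤ ‖(1 : ℂ) - q ^ m‖ := norm_sub_norm_le _ _
  have h2 : ‖q ^ m‖ = ‖q‖ ^ m := by simp [norm_pow]
  have h3 : ‖q‖ ^ m ≤ ‖q‖ ^ 2 :=
    pow_le_pow_of_le_one (norm_nonneg q) hq1.le hm
  simp only [norm_one] at h1
  linarith

lemma delta_pos (hq1 : ‖q‖ < 1) : 0 < 1 - (‖q‖) ^ 2 := by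
  have : ‖q‖ ^ 2 < 1 := pow_lt_one₀ (norm_nonneg q) hq1 two_ne_zero
  linarith

lemma frac_bound (hq1 : ‖q‖ < 1) {E D k : ℕ} (hE : k ≤ E) (hD : 2 ≤ D) :
    ‖q ^ E / (1 - q ^ D)‖ ≤ ‖q‖ ^ k / (1 - ‖q‖ ^ 2) := by
  rw [norm_div]
  have h2 : ‖q ^ E‖ = ‖q‖ ^ E := by simp [norm_pow]
  rw [h2]
  exact div_le_div₀ (pow_nonneg (norm_nonneg q) k)
    (pow_le_pow_of_le_one (norm_nonneg q) hq1.le hE)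
    (delta_pos hq1) (denom_lb hq1 hD)

lemma geom_norm_bound (hq1 : ‖q‖ < 1) (N : ℕ) :
    ‖∑ m ∈ Finset.range N, q ^ (3 * m)‖ ≤ (N : ℝ) := by
  calc ‖∑ m ∈ Finset.range N, q ^ (3 * m)‖
      ≤ ∑ m ∈ Finset.range N, ‖q ^ (3 * m)‖ := norm_sum_le _ _
    _ ≤ ∑ m ∈ Finset.range N, (1 : ℝ) := by
        refine Finset.sum_le_sum fun m _ => ?_
        have : ‖q ^ (3 * m)‖ = ‖q‖ ^ (3 * m) := by
          simp [norm_pow]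
        rw [this]
        exact pow_le_one₀ (norm_nonneg q) hq1.le
    _ = (N : ℝ) := by simp

end Stmt12Aux

section Part2
namespace Stmt12Aux
variable {q : ℂ}

/-- Summability of `q^(E k) / (1 - q^(D k))` type series. -/
lemma summable_frac (hq1 : ‖q‖ < 1) (E D : ℕ → ℕ)
    (hE : ∀ k, k ≤ E k) (hD : ∀ k, 2 ≤ D k) :
    Summable fun k : ℕ => q ^ (E k) / (1 - q ^ (D k)) := by
  refine summable_helper (C := 1 / (1 - ‖q‖ ^ 2)) (norm_nonneg q) hq1
    fun k => ?_
  have h1 := frac_bound (E := E k) (D := D k) (k := k) hq1 (hE k) (hD k)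
  have hδ := delta_pos hq1
  have hk : (0:ℝ) ≤ ‖q‖ ^ k := pow_nonneg (norm_nonneg q) k
  calc ‖q ^ E k / (1 - q ^ D k)‖ ≤ ‖q‖ ^ k / (1 - ‖q‖ ^ 2) := h1
    _ = 1 / (1 - ‖q‖ ^ 2) * (1 * ‖q‖ ^ k) := by ring
    _ ≤ 1 / (1 - ‖q‖ ^ 2) * (((k:ℝ) + 1) * ‖q‖ ^ k) := by
        have h1k : (1:ℝ) ≤ (k:ℝ) + 1 := by
          have := Nat.cast_nonneg (α := ℝ) k
          linarith
        have := mul_le_mul_of_nonneg_right h1k hk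
        have hC : (0:ℝ) ≤ 1 / (1 - ‖q‖ ^ 2) := by positivity
        nlinarith

/-- Summability of the `geom-sum` type series. -/
lemma summable_fracG (hq1 : ‖q‖ < 1) (E D : ℕ → ℕ)
    (hE : ∀ k, k ≤ E k) (hD : ∀ k, 2 ≤ D k) :
    Summable fun k : ℕ => q ^ (E k) / (1 - q ^ (D k)) *
      ∑ m ∈ Finset.range (4 * k + 3), q ^ (3 * m) := by
  refine summable_helper (C := 4 / (1 - ‖q‖ ^ 2)) (norm_nonneg q) hq1
    fun k => ?_
  have h1 := frac_bound (E := E k) (D := D k) (k := k) hq1 (hE k) (hD k)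
  have h2 := geom_norm_bound hq1 (q := q) (4 * k + 3)
  have hδ := delta_pos hq1
  have hk : (0:ℝ) ≤ ‖q‖ ^ k := pow_nonneg (norm_nonneg q) k
  rw [norm_mul]
  have hn1 : (0:ℝ) ≤ ‖q ^ E k / (1 - q ^ D k)‖ := norm_nonneg _
  have hn2 : (0:ℝ) ≤ ‖∑ m ∈ Finset.range (4 * k + 3), q ^ (3 * m)‖ := norm_nonneg _
  calc ‖q ^ E k / (1 - q ^ D k)‖ * ‖∑ m ∈ Finset.range (4 * k + 3), q ^ (3 * m)‖
      ≤ (‖q‖ ^ k / (1 - ‖q‖ ^ 2)) * ((4 * k + 3 : ℕ) : ℝ) := by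
        apply mul_le_mul h1 h2 hn2 (div_nonneg hk hδ.le)
    _ = (‖q‖ ^ k * ((4 * k + 3 : ℕ) : ℝ)) / (1 - ‖q‖ ^ 2) := by
        ring
    _ ≤ (4 * (((k:ℝ) + 1) * ‖q‖ ^ k)) / (1 - ‖q‖ ^ 2) := by
        refine (div_le_div_iff_of_pos_right hδ).mpr ?_
        push_cast
        nlinarith
    _ = 4 / (1 - ‖q‖ ^ 2) * (((k:ℝ) + 1) * ‖q‖ ^ k) := by ring

/-- Summability of the double-denominator series. -/
lemma summable_frac2 (hq1 : ‖q‖ < 1) (E D D' : ℕ → ℕ)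
    (hE : ∀ k, k ≤ E k) (hD : ∀ k, 2 ≤ D k) (hD' : ∀ k, 2 ≤ D' k) :
    Summable fun k : ℕ => q ^ (E k) * (1 + q ^ 3) /
      ((1 - q ^ (D k)) * (1 - q ^ (D' k))) := by
  set δ := 1 - ‖q‖ ^ 2 with hδdef
  have hδ := delta_pos hq1
  refine summable_helper (C := 2 / (δ * δ)) (norm_nonneg q) hq1 fun k => ?_
  have hk : (0:ℝ) ≤ ‖q‖ ^ k := pow_nonneg (norm_nonneg q) k
  have habs : ∀ m : ℕ, ‖q ^ m‖ = ‖q‖ ^ m := fun m => by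
    simp [norm_pow]
  have hnum : ‖q ^ (E k) * (1 + q ^ 3)‖ ≤ ‖q‖ ^ k * 2 := by
    rw [norm_mul, habs]
    apply mul_le_mul (pow_le_pow_of_le_one (norm_nonneg q) hq1.le (hE k)) ?_
      (norm_nonneg _) hk
    calc ‖(1 : ℂ) + q ^ 3‖ ≤ ‖(1:ℂ)‖ + ‖q ^ 3‖ := norm_add_le _ _
      _ ≤ 1 + 1 := by
          rw [norm_one, habs]
          have : ‖q‖ ^ 3 ≤ 1 := pow_le_one₀ (norm_nonneg q) hq1.le
          linarith
      _ = 2 := by norm_num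
  have hden : δ * δ ≤ ‖(1 - q ^ (D k)) * (1 - q ^ (D' k))‖ := by
    rw [norm_mul]
    exact mul_le_mul (denom_lb hq1 (hD k)) (denom_lb hq1 (hD' k)) hδ.le (norm_nonneg _)
  rw [norm_div]
  calc ‖q ^ E k * (1 + q ^ 3)‖ / ‖(1 - q ^ D k) * (1 - q ^ D' k)‖
      ≤ (‖q‖ ^ k * 2) / (δ * δ) := by
        apply div_le_div₀ (by positivity) hnum (by positivity) hden
    _ ≤ (2 * (((k:ℝ) + 1) * ‖q‖ ^ k)) / (δ * δ) := by
        refine (div_le_div_iff_of_pos_right (by positivity)).mpr ?_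
        nlinarith
    _ = 2 / (δ * δ) * (((k:ℝ) + 1) * ‖q‖ ^ k) := by ring

end Stmt12Aux
end Part2

section Part3
namespace Stmt12Aux
variable {q : ℂ}

lemma geom_eval (k : ℕ) :
    (1 - q ^ 3) * ∑ m ∈ Finset.range (4 * k + 3), q ^ (3 * m) = 1 - q ^ (12 * k + 9) := by
  have h1 : ∑ m ∈ Finset.range (4 * k + 3), q ^ (3 * m)
      = ∑ m ∈ Finset.range (4 * k + 3), (q ^ 3) ^ m :=
    Finset.sum_congr rfl fun m _ => pow_mul q 3 m
  have h2 := mul_geom_sum (q ^ 3) (4 * k + 3)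
  have h3 : (q ^ 3) ^ (4 * k + 3) = q ^ (12 * k + 9) := by
    rw [← pow_mul]; ring_nf
  rw [h1]
  linear_combination -h2 + h3

lemma geom_val (hq1 : ‖q‖ < 1) (k : ℕ) :
    ∑ m ∈ Finset.range (4 * k + 3), q ^ (3 * m)
      = (1 - q ^ (12 * k + 9)) / (1 - q ^ 3) := by
  have h3 : (1 : ℂ) - q ^ 3 ≠ 0 := one_sub_pow_ne hq1 (by norm_num)
  field_simp
  linear_combination geom_eval (q := q) k

/-- First per-k identity. -/
lemma key1 (hq1 : ‖q‖ < 1) (k : ℕ) :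
    (1 - q ^ 3) * (q ^ (12 * k ^ 2 + 12 * k + 1) / (1 - q ^ (12 * k + 2)) *
        ∑ m ∈ Finset.range (4 * k + 3), q ^ (3 * m))
      + (1 - q ^ 3) * (q ^ (12 * k ^ 2 + 36 * k + 12) * (1 + q ^ 3) /
          ((1 - q ^ (12 * k + 2)) * (1 - q ^ (12 * k + 8))))
    = q ^ (12 * k ^ 2 + 12 * k + 1) / (1 - q ^ (12 * k + 2))
      - q ^ (12 * k ^ 2 + 24 * k + 10) / (1 - q ^ (12 * k + 8)) := by
  have h3 : (1 : ℂ) - q ^ 3 ≠ 0 := one_sub_pow_ne hq1 (by norm_num)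
  have hd1 : (1 : ℂ) - q ^ (12 * k + 2) ≠ 0 := one_sub_pow_ne hq1 (by omega)
  have hd2 : (1 : ℂ) - q ^ (12 * k + 8) ≠ 0 := one_sub_pow_ne hq1 (by omega)
  rw [geom_val hq1 k]
  field_simp
  ring


/-- Second per-k identity. -/
lemma key2 (hq1 : ‖q‖ < 1) (k : ℕ) :
    (1 - q ^ 3) * (q ^ (12 * k ^ 2 + 12 * k + 2) / (1 - q ^ (12 * k + 4)) *
        ∑ m ∈ Finset.range (4 * k + 3), q ^ (3 * m))
      + (1 - q ^ 3) * (q ^ (12 * k ^ 2 + 36 * k + 15) * (1 + q ^ 3) /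
          ((1 - q ^ (12 * k + 4)) * (1 - q ^ (12 * k + 10))))
    = q ^ (12 * k ^ 2 + 12 * k + 2) / (1 - q ^ (12 * k + 4))
      - q ^ (12 * k ^ 2 + 24 * k + 11) / (1 - q ^ (12 * k + 10)) := by
  have h3 : (1 : ℂ) - q ^ 3 ≠ 0 := one_sub_pow_ne hq1 (by norm_num)
  have hd1 : (1 : ℂ) - q ^ (12 * k + 4) ≠ 0 := one_sub_pow_ne hq1 (by omega)
  have hd2 : (1 : ℂ) - q ^ (12 * k + 10) ≠ 0 := one_sub_pow_ne hq1 (by omega)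
  rw [geom_val hq1 k]
  field_simp
  ring

end Stmt12Aux
end Part3

section Part4
namespace Stmt12Aux
variable {q : ℂ}

/-- Value of the bilateral summand at nonnegative integers. -/
lemma Fnat (n : ℕ) :
    (-1 : ℂ) ^ (n : ℤ) * q ^ (3 * (n : ℤ) ^ 2 + 6 * (n : ℤ) + 1) /
        (1 - q ^ (6 * (n : ℤ) + 2))
      = (-1 : ℂ) ^ n * q ^ (3 * n ^ 2 + 6 * n + 1) / (1 - q ^ (6 * n + 2)) := by
  have e1 : (3 * (n : ℤ) ^ 2 + 6 * (n : ℤ) + 1) = ((3 * n ^ 2 + 6 * n + 1 : ℕ) : ℤ) := by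
    push_cast; ring
  have e2 : (6 * (n : ℤ) + 2) = ((6 * n + 2 : ℕ) : ℤ) := by push_cast; ring
  rw [e1, e2, zpow_natCast, zpow_natCast, zpow_natCast]

/-- Value of the bilateral summand at negative integers. -/
lemma Fneg (hq0 : q ≠ 0) (hq1 : ‖q‖ < 1) (n : ℕ) :
    (-1 : ℂ) ^ (-((n : ℤ) + 1)) * q ^ (3 * (-((n : ℤ) + 1)) ^ 2 + 6 * (-((n : ℤ) + 1)) + 1) /
        (1 - q ^ (6 * (-((n : ℤ) + 1)) + 2))
      = (-1 : ℂ) ^ n * q ^ (3 * n ^ 2 + 6 * n + 2) / (1 - q ^ (6 * n + 4)) := by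
  set w : ℂ := q ^ (6 * n + 4) with hw
  have hw0 : w ≠ 0 := pow_ne_zero _ hq0
  have hw1 : (1 : ℂ) - w ≠ 0 := one_sub_pow_ne hq1 (by omega)
  have e0 : (-1 : ℂ) ^ (-((n : ℤ) + 1)) = -(-1 : ℂ) ^ n := by
    have : (-((n : ℤ) + 1)) = -(((n + 1 : ℕ) : ℤ)) := by push_cast; ring
    rw [this, zpow_neg, zpow_natCast, ← inv_pow, inv_neg, inv_one, pow_succ]
    ring
  have e1 : (3 * (-((n : ℤ) + 1)) ^ 2 + 6 * (-((n : ℤ) + 1)) + 1)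
      = ((3 * n ^ 2 + 6 * n + 2 : ℕ) : ℤ) + (-((6 * n + 4 : ℕ) : ℤ)) := by
    push_cast; ring
  have e2 : (6 * (-((n : ℤ) + 1)) + 2) = -((6 * n + 4 : ℕ) : ℤ) := by push_cast; ring
  rw [e0, e1, e2, zpow_add₀ hq0, zpow_natCast, zpow_neg, zpow_natCast, ← hw]
  have hden : (1 : ℂ) - w⁻¹ = -(1 - w) * w⁻¹ := by
    field_simp
    ring
  rw [hden]
  have e3 : -(-1 : ℂ) ^ n * (q ^ (3 * n ^ 2 + 6 * n + 2) * w⁻¹)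
      = (-((-1 : ℂ) ^ n * q ^ (3 * n ^ 2 + 6 * n + 2))) * w⁻¹ := by ring
  rw [e3, mul_div_mul_right _ _ (inv_ne_zero hw0), neg_div_neg_eq]

end Stmt12Aux
end Part4

set_option maxHeartbeats 1000000 in
open Stmt12Aux in
theorem stmt_12 (q : ℂ) (hq0 : q ≠ 0) (hq1 : ‖q‖ < 1) :
    (∑' n : ℤ, (-1 : ℂ) ^ n * q ^ (3 * n ^ 2 + 6 * n + 1) / (1 - q ^ (6 * n + 2))) =
      (1 - q ^ 3) *
        ((∑' n : ℕ, q ^ (12 * n ^ 2 + 12 * n + 1) / (1 - q ^ (12 * n + 2)) *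
            ∑ m ∈ Finset.range (4 * n + 3), q ^ (3 * m))
          + (∑' n : ℕ, q ^ (12 * n ^ 2 + 36 * n + 12) * (1 + q ^ 3) /
              ((1 - q ^ (12 * n + 2)) * (1 - q ^ (12 * n + 8))))
          + (∑' n : ℕ, q ^ (12 * n ^ 2 + 12 * n + 2) / (1 - q ^ (12 * n + 4)) *
              ∑ m ∈ Finset.range (4 * n + 3), q ^ (3 * m))
          + ∑' n : ℕ, q ^ (12 * n ^ 2 + 36 * n + 15) * (1 + q ^ 3) /
              ((1 - q ^ (12 * n + 4)) * (1 - q ^ (12 * n + 10)))) := by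
  -- summabilities of the four basic series
  have hA : Summable fun k : ℕ => q ^ (12 * k ^ 2 + 12 * k + 1) / (1 - q ^ (12 * k + 2)) :=
    summable_frac hq1 _ _ (fun k => by nlinarith) (fun k => by omega)
  have hB : Summable fun k : ℕ => q ^ (12 * k ^ 2 + 12 * k + 2) / (1 - q ^ (12 * k + 4)) :=
    summable_frac hq1 _ _ (fun k => by nlinarith) (fun k => by omega)
  have hC : Summable fun k : ℕ => q ^ (12 * k ^ 2 + 24 * k + 10) / (1 - q ^ (12 * k + 8)) :=
    summable_frac hq1 _ _ (fun k => by nlinarith) (fun k => by omega)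
  have hD : Summable fun k : ℕ => q ^ (12 * k ^ 2 + 24 * k + 11) / (1 - q ^ (12 * k + 10)) :=
    summable_frac hq1 _ _ (fun k => by nlinarith) (fun k => by omega)
  -- summabilities of the four series on the RHS
  have hT1 : Summable fun k : ℕ => q ^ (12 * k ^ 2 + 12 * k + 1) / (1 - q ^ (12 * k + 2)) *
      ∑ m ∈ Finset.range (4 * k + 3), q ^ (3 * m) :=
    summable_fracG hq1 _ _ (fun k => by nlinarith) (fun k => by omega)
  have hT3 : Summable fun k : ℕ => q ^ (12 * k ^ 2 + 12 * k + 2) / (1 - q ^ (12 * k + 4)) *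
      ∑ m ∈ Finset.range (4 * k + 3), q ^ (3 * m) :=
    summable_fracG hq1 _ _ (fun k => by nlinarith) (fun k => by omega)
  have hT2 : Summable fun k : ℕ => q ^ (12 * k ^ 2 + 36 * k + 12) * (1 + q ^ 3) /
      ((1 - q ^ (12 * k + 2)) * (1 - q ^ (12 * k + 8))) :=
    summable_frac2 hq1 _ _ _ (fun k => by nlinarith) (fun k => by omega) (fun k => by omega)
  have hT4 : Summable fun k : ℕ => q ^ (12 * k ^ 2 + 36 * k + 15) * (1 + q ^ 3) /
      ((1 - q ^ (12 * k + 4)) * (1 - q ^ (12 * k + 10))) :=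
    summable_frac2 hq1 _ _ _ (fun k => by nlinarith) (fun k => by omega) (fun k => by omega)
  -- even / odd pointwise values
  have heA : ∀ k : ℕ, q ^ (12 * k ^ 2 + 12 * k + 1) / (1 - q ^ (12 * k + 2))
      = (-1 : ℂ) ^ (2 * k) * q ^ (3 * (2 * k) ^ 2 + 6 * (2 * k) + 1) /
          (1 - q ^ (6 * (2 * k) + 2)) := by
    intro k
    have h1 : ((-1 : ℂ)) ^ (2 * k) = 1 := by rw [pow_mul]; norm_num
    have h2 : 3 * (2 * k) ^ 2 + 6 * (2 * k) + 1 = 12 * k ^ 2 + 12 * k + 1 := by ring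
    have h3 : 6 * (2 * k) + 2 = 12 * k + 2 := by ring
    rw [h1, h2, h3, one_mul]
  have hoC : ∀ k : ℕ, -(q ^ (12 * k ^ 2 + 24 * k + 10) / (1 - q ^ (12 * k + 8)))
      = (-1 : ℂ) ^ (2 * k + 1) * q ^ (3 * (2 * k + 1) ^ 2 + 6 * (2 * k + 1) + 1) /
          (1 - q ^ (6 * (2 * k + 1) + 2)) := by
    intro k
    have h1 : ((-1 : ℂ)) ^ (2 * k + 1) = -1 := by rw [pow_succ, pow_mul]; norm_num
    have h2 : 3 * (2 * k + 1) ^ 2 + 6 * (2 * k + 1) + 1 = 12 * k ^ 2 + 24 * k + 10 := by ring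
    have h3 : 6 * (2 * k + 1) + 2 = 12 * k + 8 := by ring
    rw [h1, h2, h3]
    ring
  have heB : ∀ k : ℕ, q ^ (12 * k ^ 2 + 12 * k + 2) / (1 - q ^ (12 * k + 4))
      = (-1 : ℂ) ^ (2 * k) * q ^ (3 * (2 * k) ^ 2 + 6 * (2 * k) + 2) /
          (1 - q ^ (6 * (2 * k) + 4)) := by
    intro k
    have h1 : ((-1 : ℂ)) ^ (2 * k) = 1 := by rw [pow_mul]; norm_num
    have h2 : 3 * (2 * k) ^ 2 + 6 * (2 * k) + 2 = 12 * k ^ 2 + 12 * k + 2 := by ring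
    have h3 : 6 * (2 * k) + 4 = 12 * k + 4 := by ring
    rw [h1, h2, h3, one_mul]
  have hoD : ∀ k : ℕ, -(q ^ (12 * k ^ 2 + 24 * k + 11) / (1 - q ^ (12 * k + 10)))
      = (-1 : ℂ) ^ (2 * k + 1) * q ^ (3 * (2 * k + 1) ^ 2 + 6 * (2 * k + 1) + 2) /
          (1 - q ^ (6 * (2 * k + 1) + 4)) := by
    intro k
    have h1 : ((-1 : ℂ)) ^ (2 * k + 1) = -1 := by rw [pow_succ, pow_mul]; norm_num
    have h2 : 3 * (2 * k + 1) ^ 2 + 6 * (2 * k + 1) + 2 = 12 * k ^ 2 + 24 * k + 11 := by ring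
    have h3 : 6 * (2 * k + 1) + 4 = 12 * k + 10 := by ring
    rw [h1, h2, h3]
    ring
  -- summability of the nat-indexed summand sequences
  have hCneg : Summable fun k : ℕ =>
      -(q ^ (12 * k ^ 2 + 24 * k + 10) / (1 - q ^ (12 * k + 8))) := hC.neg
  have hDneg : Summable fun k : ℕ =>
      -(q ^ (12 * k ^ 2 + 24 * k + 11) / (1 - q ^ (12 * k + 10))) := hD.neg
  have hf2 : Summable fun n : ℕ =>
      (-1 : ℂ) ^ n * q ^ (3 * n ^ 2 + 6 * n + 1) / (1 - q ^ (6 * n + 2)) :=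
    Summable.even_add_odd (hA.congr heA) (hCneg.congr hoC)
  have hg2 : Summable fun n : ℕ =>
      (-1 : ℂ) ^ n * q ^ (3 * n ^ 2 + 6 * n + 2) / (1 - q ^ (6 * n + 4)) :=
    Summable.even_add_odd (hB.congr heB) (hDneg.congr hoD)
  -- split the bilateral sum
  have hs1 : Summable fun n : ℕ =>
      (-1 : ℂ) ^ (n : ℤ) * q ^ (3 * (n : ℤ) ^ 2 + 6 * (n : ℤ) + 1) /
        (1 - q ^ (6 * (n : ℤ) + 2)) :=
    hf2.congr fun n => (Fnat n).symm
  have hs2 : Summable fun n : ℕ =>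
      (-1 : ℂ) ^ (-((n : ℤ) + 1)) * q ^ (3 * (-((n : ℤ) + 1)) ^ 2 + 6 * (-((n : ℤ) + 1)) + 1) /
        (1 - q ^ (6 * (-((n : ℤ) + 1)) + 2)) :=
    hg2.congr fun n => (Fneg hq0 hq1 n).symm
  have hsplit := tsum_of_nat_of_neg_add_one
    (f := fun n : ℤ => (-1 : ℂ) ^ n * q ^ (3 * n ^ 2 + 6 * n + 1) / (1 - q ^ (6 * n + 2)))
    hs1 hs2
  have e1 : (∑' n : ℕ, (-1 : ℂ) ^ (n : ℤ) * q ^ (3 * (n : ℤ) ^ 2 + 6 * (n : ℤ) + 1) /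
        (1 - q ^ (6 * (n : ℤ) + 2)))
      = (∑' k : ℕ, q ^ (12 * k ^ 2 + 12 * k + 1) / (1 - q ^ (12 * k + 2)))
        - ∑' k : ℕ, q ^ (12 * k ^ 2 + 24 * k + 10) / (1 - q ^ (12 * k + 8)) := by
    calc (∑' n : ℕ, (-1 : ℂ) ^ (n : ℤ) * q ^ (3 * (n : ℤ) ^ 2 + 6 * (n : ℤ) + 1) /
          (1 - q ^ (6 * (n : ℤ) + 2)))
        = ∑' n : ℕ, (-1 : ℂ) ^ n * q ^ (3 * n ^ 2 + 6 * n + 1) / (1 - q ^ (6 * n + 2)) :=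
          tsum_congr fun n => Fnat n
      _ = (∑' k : ℕ, (-1 : ℂ) ^ (2 * k) * q ^ (3 * (2 * k) ^ 2 + 6 * (2 * k) + 1) /
            (1 - q ^ (6 * (2 * k) + 2)))
          + ∑' k : ℕ, (-1 : ℂ) ^ (2 * k + 1) * q ^ (3 * (2 * k + 1) ^ 2 + 6 * (2 * k + 1) + 1) /
            (1 - q ^ (6 * (2 * k + 1) + 2)) :=
          (tsum_even_add_odd
            (f := fun n : ℕ => (-1 : ℂ) ^ n * q ^ (3 * n ^ 2 + 6 * n + 1) / (1 - q ^ (6 * n + 2)))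
            (hA.congr heA) (hCneg.congr hoC)).symm
      _ = (∑' k : ℕ, q ^ (12 * k ^ 2 + 12 * k + 1) / (1 - q ^ (12 * k + 2)))
          + ∑' k : ℕ, -(q ^ (12 * k ^ 2 + 24 * k + 10) / (1 - q ^ (12 * k + 8))) := by
          rw [tsum_congr (fun k => (heA k).symm), tsum_congr (fun k => (hoC k).symm)]
      _ = (∑' k : ℕ, q ^ (12 * k ^ 2 + 12 * k + 1) / (1 - q ^ (12 * k + 2)))
          - ∑' k : ℕ, q ^ (12 * k ^ 2 + 24 * k + 10) / (1 - q ^ (12 * k + 8)) := by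
          rw [tsum_neg]; ring
  have e2 : (∑' n : ℕ, (-1 : ℂ) ^ (-((n : ℤ) + 1)) *
        q ^ (3 * (-((n : ℤ) + 1)) ^ 2 + 6 * (-((n : ℤ) + 1)) + 1) /
        (1 - q ^ (6 * (-((n : ℤ) + 1)) + 2)))
      = (∑' k : ℕ, q ^ (12 * k ^ 2 + 12 * k + 2) / (1 - q ^ (12 * k + 4)))
        - ∑' k : ℕ, q ^ (12 * k ^ 2 + 24 * k + 11) / (1 - q ^ (12 * k + 10)) := by
    calc (∑' n : ℕ, (-1 : ℂ) ^ (-((n : ℤ) + 1)) *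
          q ^ (3 * (-((n : ℤ) + 1)) ^ 2 + 6 * (-((n : ℤ) + 1)) + 1) /
          (1 - q ^ (6 * (-((n : ℤ) + 1)) + 2)))
        = ∑' n : ℕ, (-1 : ℂ) ^ n * q ^ (3 * n ^ 2 + 6 * n + 2) / (1 - q ^ (6 * n + 4)) :=
          tsum_congr fun n => Fneg hq0 hq1 n
      _ = (∑' k : ℕ, (-1 : ℂ) ^ (2 * k) * q ^ (3 * (2 * k) ^ 2 + 6 * (2 * k) + 2) /
            (1 - q ^ (6 * (2 * k) + 4)))
          + ∑' k : ℕ, (-1 : ℂ) ^ (2 * k + 1) * q ^ (3 * (2 * k + 1) ^ 2 + 6 * (2 * k + 1) + 2) /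
            (1 - q ^ (6 * (2 * k + 1) + 4)) :=
          (tsum_even_add_odd
            (f := fun n : ℕ => (-1 : ℂ) ^ n * q ^ (3 * n ^ 2 + 6 * n + 2) / (1 - q ^ (6 * n + 4)))
            (hB.congr heB) (hDneg.congr hoD)).symm
      _ = (∑' k : ℕ, q ^ (12 * k ^ 2 + 12 * k + 2) / (1 - q ^ (12 * k + 4)))
          + ∑' k : ℕ, -(q ^ (12 * k ^ 2 + 24 * k + 11) / (1 - q ^ (12 * k + 10))) := by
          rw [tsum_congr (fun k => (heB k).symm), tsum_congr (fun k => (hoD k).symm)]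
      _ = (∑' k : ℕ, q ^ (12 * k ^ 2 + 12 * k + 2) / (1 - q ^ (12 * k + 4)))
          - ∑' k : ℕ, q ^ (12 * k ^ 2 + 24 * k + 11) / (1 - q ^ (12 * k + 10)) := by
          rw [tsum_neg]; ring
  -- now compute the RHS
  have hR1 : (1 - q ^ 3) * (∑' k : ℕ, q ^ (12 * k ^ 2 + 12 * k + 1) / (1 - q ^ (12 * k + 2)) *
        ∑ m ∈ Finset.range (4 * k + 3), q ^ (3 * m))
      + (1 - q ^ 3) * (∑' k : ℕ, q ^ (12 * k ^ 2 + 36 * k + 12) * (1 + q ^ 3) /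
          ((1 - q ^ (12 * k + 2)) * (1 - q ^ (12 * k + 8))))
      = (∑' k : ℕ, q ^ (12 * k ^ 2 + 12 * k + 1) / (1 - q ^ (12 * k + 2)))
        - ∑' k : ℕ, q ^ (12 * k ^ 2 + 24 * k + 10) / (1 - q ^ (12 * k + 8)) := by
    rw [← tsum_mul_left, ← tsum_mul_left, ← Summable.tsum_add (hT1.mul_left _) (hT2.mul_left _),
      tsum_congr (fun k => key1 hq1 k), Summable.tsum_sub hA hC]
  have hR2 : (1 - q ^ 3) * (∑' k : ℕ, q ^ (12 * k ^ 2 + 12 * k + 2) / (1 - q ^ (12 * k + 4)) *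
        ∑ m ∈ Finset.range (4 * k + 3), q ^ (3 * m))
      + (1 - q ^ 3) * (∑' k : ℕ, q ^ (12 * k ^ 2 + 36 * k + 15) * (1 + q ^ 3) /
          ((1 - q ^ (12 * k + 4)) * (1 - q ^ (12 * k + 10))))
      = (∑' k : ℕ, q ^ (12 * k ^ 2 + 12 * k + 2) / (1 - q ^ (12 * k + 4)))
        - ∑' k : ℕ, q ^ (12 * k ^ 2 + 24 * k + 11) / (1 - q ^ (12 * k + 10)) := by
    rw [← tsum_mul_left, ← tsum_mul_left, ← Summable.tsum_add (hT3.mul_left _) (hT4.mul_left _),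
      tsum_congr (fun k => key2 hq1 k), Summable.tsum_sub hB hD]
  rw [hsplit, e1, e2]
  linear_combination -hR1 - hR2
end

section
/- There exists a sequence (a_n)_{n≥0} of nonnegative real numbers such that for every real q with 0 < q < 1, ((−q³;q³)_∞/(q³;q³)_∞) · Σ_{n∈ℤ} (−1)^n q^{3n²+6n+1}/(1−q^{6n+2}) = Σ_{n=0}^∞ a_n q^n; i.e., this function has nonnegative Maclaurin coefficients. -/
open scoped BigOperators

/-- The infinite q-Pochhammer symbol `(x; q)_∞ = ∏_{n=0}^∞ (1 - x qⁿ)` (real version). -/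
noncomputable def pochR (x q : ℝ) : ℝ := ∏' n : ℕ, (1 - x * q ^ n)

/-- `J_m = (q^m; q^m)_∞`. -/
noncomputable def JR (m : ℕ) (q : ℝ) : ℝ := pochR (q ^ m) (q ^ m)

/-- `J_{a,m} = (q^a; q^m)_∞ (q^{m-a}; q^m)_∞ (q^m; q^m)_∞`. -/
noncomputable def JamR (a m : ℕ) (q : ℝ) : ℝ :=
  pochR (q ^ a) (q ^ m) * pochR (q ^ (m - a)) (q ^ m) * pochR (q ^ m) (q ^ m)

namespace Stmt19

open Filter Function Finset
open scoped ENNReal NNReal Topology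

/-! ### Combinatorial coefficients of the prefactor -/

/-- Coefficients of `∏_{m=1}^{N} (1+x^m)/(1-x^m)`. -/
def pn : ℕ → ℕ → ℕ
  | 0, c => if c = 0 then 1 else 0
  | (N+1), c => pn N c + 2 * ∑ j ∈ Finset.range c,
      (if (N+1) * (j+1) ≤ c then pn N (c - (N+1)*(j+1)) else 0)

/-- Stabilized coefficients. -/
def pA (c : ℕ) : ℕ := pn c c

lemma pn_succ (N c : ℕ) : pn (N+1) c = pn N c + 2 * ∑ j ∈ Finset.range c,
    (if (N+1) * (j+1) ≤ c then pn N (c - (N+1)*(j+1)) else 0) := rfl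

lemma pn_stab_succ {N c : ℕ} (h : c ≤ N) : pn (N+1) c = pn N c := by
  rw [pn_succ]
  have : ∀ j ∈ Finset.range c,
      (if (N+1) * (j+1) ≤ c then pn N (c - (N+1)*(j+1)) else 0) = 0 := by
    intro j _
    rw [if_neg]
    intro hle
    have h1 : N + 1 ≤ (N+1) * (j+1) := Nat.le_mul_of_pos_right _ (Nat.succ_pos j)
    omega
  rw [Finset.sum_congr rfl this]
  simp

lemma pn_eq_pA {N c : ℕ} (h : c ≤ N) : pn N c = pA c := by
  obtain ⟨d, rfl⟩ := Nat.exists_eq_add_of_le h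
  induction d with
  | zero => rfl
  | succ d ih =>
      rw [← Nat.add_assoc, pn_stab_succ (by omega), ih (by omega)]

lemma pn_le_succ (N c : ℕ) : pn N c ≤ pn (N+1) c := by
  rw [pn_succ]; exact Nat.le_add_right _ _

lemma pn_mono_N (c : ℕ) : Monotone (fun N => pn N c) :=
  monotone_nat_of_le_succ fun N => pn_le_succ N c

lemma pn_le_pA (N c : ℕ) : pn N c ≤ pA c := by
  rcases le_total N c with h | h
  · exact (pn_mono_N c h).trans (le_of_eq (pn_eq_pA le_rfl))
  · exact le_of_eq (pn_eq_pA h)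

lemma pn_one (c : ℕ) : pn 1 c = if c = 0 then 1 else 2 := by
  cases c with
  | zero => simp [pn]
  | succ c =>
      rw [pn_succ]
      have h0 : pn 0 (c+1) = 0 := by simp [pn]
      rw [h0]
      have : ∀ j ∈ Finset.range (c+1),
          (if 1 * (j+1) ≤ c+1 then pn 0 (c+1 - 1*(j+1)) else 0)
            = if j = c then 1 else 0 := by
        intro j hj
        simp only [Finset.mem_range] at hj
        rw [if_pos (by omega)]
        simp only [pn]
        by_cases h : j = c
        · subst h; simp
        · rw [if_neg (by omega), if_neg h]
      rw [Finset.sum_congr rfl this, Finset.sum_ite_eq' (Finset.range (c+1)) c]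
      simp

lemma pn_mono_c {N : ℕ} (hN : 1 ≤ N) : Monotone (pn N) := by
  induction N with
  | zero => omega
  | succ N ih =>
      rcases Nat.eq_or_lt_of_le hN with h | h
      · -- N + 1 = 1, i.e. N = 0
        have hN0 : N = 0 := by omega
        subst hN0
        apply monotone_nat_of_le_succ
        intro c
        rw [pn_one, pn_one]
        split <;> split <;> omega
      · have hN1 : 1 ≤ N := by omega
        have ihN := ih hN1
        apply monotone_nat_of_le_succ
        intro c
        rw [pn_succ, pn_succ]
        have hsum : ∑ j ∈ Finset.range c,
            (if (N+1) * (j+1) ≤ c then pn N (c - (N+1)*(j+1)) else 0)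
            ≤ ∑ j ∈ Finset.range (c+1),
            (if (N+1) * (j+1) ≤ c+1 then pn N (c+1 - (N+1)*(j+1)) else 0) := by
          refine le_trans (Finset.sum_le_sum ?_)
            (Finset.sum_le_sum_of_subset_of_nonneg
              (Finset.range_subset_range.2 (Nat.le_succ c)) (by intros; positivity))
          intro j _
          by_cases h : (N+1) * (j+1) ≤ c
          · rw [if_pos h, if_pos (by omega)]
            have : c + 1 - (N+1)*(j+1) = (c - (N+1)*(j+1)) + 1 := by omega
            rw [this]
            exact ihN (Nat.le_succ _)
          · rw [if_neg h]; positivity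
        have h1 : pn N c ≤ pn N (c+1) := ihN (Nat.le_succ c)
        omega

lemma pA_mono : Monotone pA := by
  intro c c' h
  rcases Nat.eq_or_lt_of_le h with rfl | h'
  · exact le_rfl
  · have h1 : 1 ≤ c' := by omega
    calc pA c = pn c' c := (pn_eq_pA h).symm
    _ ≤ pn c' c' := pn_mono_c h1 h
    _ = pA c' := rfl

/-! ### Exponent bookkeeping -/

def eA (k : ℕ) : ℕ := 12*k^2+12*k+1
def eB (k : ℕ) : ℕ := 12*k^2+24*k+10
def da (k : ℕ) : ℕ := 12*k+2
def db (k : ℕ) : ℕ := 12*k+8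

def e1 (k j : ℕ) : ℕ := eA k + da k * j
def e2 (k j : ℕ) : ℕ := (eA k + 1) + (da k + 2) * j
def e3 (k j : ℕ) : ℕ := eB k + db k * j
def e4 (k j : ℕ) : ℕ := (eB k + 1) + (db k + 2) * j

def w1 (x : ℕ × ℕ × ℕ) : ℕ := 3*x.1 + e1 x.2.1 x.2.2
def w2 (x : ℕ × ℕ × ℕ) : ℕ := 3*x.1 + e2 x.2.1 x.2.2
def w3 (x : ℕ × ℕ × ℕ) : ℕ := 3*x.1 + e3 x.2.1 x.2.2
def w4 (x : ℕ × ℕ × ℕ) : ℕ := 3*x.1 + e4 x.2.1 x.2.2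

lemma w3_shift (c k j : ℕ) : w3 (c, k, j) = w1 (c + (4*k+3+2*j), k, j) := by
  simp only [w3, w1, e3, e1, eB, eA, db, da]; ring

lemma w4_shift (c k j : ℕ) : w4 (c, k, j) = w2 (c + (4*k+3+2*j), k, j) := by
  simp only [w4, w2, e4, e2, eB, eA, db, da]; ring

/-! ### The coefficient sequence -/

noncomputable def cw (w : ℕ × ℕ × ℕ → ℕ) (n : ℕ) : ℝ≥0∞ :=
  ∑' x : {y : ℕ × ℕ × ℕ // w y = n}, (pA (x : ℕ × ℕ × ℕ).1 : ℝ≥0∞)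

noncomputable def aSeq (n : ℕ) : ℝ :=
  ((cw w1 n + cw w2 n) - (cw w3 n + cw w4 n)).toReal

lemma aSeq_nonneg (n : ℕ) : 0 ≤ aSeq n := ENNReal.toReal_nonneg

/-! ### Infinite products of `1 ± xₙ` -/

lemma prodMono {x : ℕ → ℝ} (h0 : ∀ n, 0 ≤ x n) :
    Monotone (fun s : Finset ℕ => ∏ i ∈ s, (1 + x i)) := by
  intro s t hst
  simp only
  rw [← Finset.prod_sdiff hst]
  have h1 : (1:ℝ) ≤ ∏ i ∈ t \ s, (1 + x i) := by
    calc (1:ℝ) = ∏ i ∈ t \ s, 1 := by simp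
    _ ≤ ∏ i ∈ t \ s, (1 + x i) :=
        Finset.prod_le_prod (by intros; norm_num) (by intro i _; linarith [h0 i])
  have h2 : (0:ℝ) ≤ ∏ i ∈ s, (1 + x i) :=
    Finset.prod_nonneg (by intro i _; linarith [h0 i])
  exact le_mul_of_one_le_left h2 h1

lemma prodBdd {x : ℕ → ℝ} (h0 : ∀ n, 0 ≤ x n) (hs : Summable x) :
    BddAbove (Set.range (fun s : Finset ℕ => ∏ i ∈ s, (1 + x i))) := by
  refine ⟨Real.exp (∑' n, x n), ?_⟩
  rintro _ ⟨s, rfl⟩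
  calc ∏ i ∈ s, (1 + x i) ≤ ∏ i ∈ s, Real.exp (x i) :=
        Finset.prod_le_prod (by intro i _; linarith [h0 i])
          (by intro i _; linarith [Real.add_one_le_exp (x i)])
  _ = Real.exp (∑ i ∈ s, x i) := (Real.exp_sum s x).symm
  _ ≤ Real.exp (∑' n, x n) :=
      Real.exp_le_exp.2 (Summable.sum_le_tsum s (fun i _ => h0 i) hs)

lemma hasProd_one_add {x : ℕ → ℝ} (h0 : ∀ n, 0 ≤ x n) (hs : Summable x) :
    HasProd (fun n => 1 + x n) (⨆ s : Finset ℕ, ∏ i ∈ s, (1 + x i)) :=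
  tendsto_atTop_ciSup (prodMono h0) (prodBdd h0 hs)

lemma one_le_iSup_prod {x : ℕ → ℝ} (h0 : ∀ n, 0 ≤ x n) (hs : Summable x) :
    1 ≤ ⨆ s : Finset ℕ, ∏ i ∈ s, (1 + x i) := by
  have := le_ciSup (prodBdd h0 hs) (∅ : Finset ℕ)
  simpa using this

lemma hasProd_one_sub {x : ℕ → ℝ} (h0 : ∀ n, 0 ≤ x n) (h1 : ∀ n, x n < 1)
    (hs : Summable fun n => x n / (1 - x n)) :
    HasProd (fun n => 1 - x n)
      ((⨆ s : Finset ℕ, ∏ i ∈ s, (1 + x i / (1 - x i)))⁻¹) := by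
  set z : ℕ → ℝ := fun n => x n / (1 - x n) with hz
  have hz0 : ∀ n, 0 ≤ z n := fun n => div_nonneg (h0 n) (by linarith [h1 n])
  have hP := hasProd_one_add hz0 hs
  have hP1 := one_le_iSup_prod hz0 hs
  set P := ⨆ s : Finset ℕ, ∏ i ∈ s, (1 + z i) with hPdef
  have hfac : ∀ n, (1 : ℝ) - x n = (1 + z n)⁻¹ := by
    intro n
    have hne : (1:ℝ) - x n ≠ 0 := by linarith [h1 n]
    have : 1 + z n = (1 - x n)⁻¹ := by
      rw [hz]; field_simp; ring
    rw [this, inv_inv]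
  have hnet : ∀ s : Finset ℕ, ∏ i ∈ s, (1 - x i) = (∏ i ∈ s, (1 + z i))⁻¹ := by
    intro s
    rw [← Finset.prod_inv_distrib]
    exact Finset.prod_congr rfl fun i _ => hfac i
  have hPne : P ≠ 0 := by positivity
  have htend : Filter.Tendsto (fun s : Finset ℕ => (∏ i ∈ s, (1 + z i))⁻¹)
      Filter.atTop (nhds P⁻¹) := Filter.Tendsto.inv₀ hP hPne
  exact htend.congr fun s => (hnet s).symm



/-! ### Regrouping lemma for double sums -/

lemma regroup2 (g : ℕ → ℝ≥0∞) (K : ℕ) (R : ℝ≥0∞) :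
    ∑' (c : ℕ), ∑' (j : ℕ), g c * R ^ (3*(c + (K+1)*(j+1)))
      = ∑' (n : ℕ), (∑ j ∈ Finset.range n,
          if (K+1)*(j+1) ≤ n then g (n - (K+1)*(j+1)) else 0) * R ^ (3*n) := by
  set G : ℕ × ℕ → ℝ≥0∞ := fun p =>
    if (K+1)*(p.2+1) ≤ p.1 then g (p.1 - (K+1)*(p.2+1)) * R ^ (3*p.1) else 0 with hG
  have hLHS : ∑' (c : ℕ), ∑' (j : ℕ), g c * R ^ (3*(c + (K+1)*(j+1)))
      = ∑' p : ℕ × ℕ, g p.1 * R ^ (3*(p.1 + (K+1)*(p.2+1))) :=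
    (ENNReal.tsum_prod' (f := fun p : ℕ × ℕ => g p.1 * R ^ (3*(p.1 + (K+1)*(p.2+1))))).symm
  set ι : ℕ × ℕ → ℕ × ℕ := fun p => (p.1 + (K+1)*(p.2+1), p.2) with hι
  have hinj : Function.Injective ι := by
    rintro ⟨c, j⟩ ⟨c', j'⟩ h
    simp only [hι, Prod.mk.injEq] at h
    obtain ⟨h1, h2⟩ := h
    subst h2
    exact Prod.ext (by omega) rfl
  have hcomp : ∀ p : ℕ × ℕ, G (ι p) = g p.1 * R ^ (3*(p.1 + (K+1)*(p.2+1))) := by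
    rintro ⟨c, j⟩
    simp only [hG, hι]
    rw [if_pos (Nat.le_add_left _ _)]
    congr 2
    omega
  have hsupp : Function.support G ⊆ Set.range ι := by
    rintro ⟨n, j⟩ hp
    simp only [Function.mem_support, hG] at hp
    by_cases h : (K+1)*(j+1) ≤ n
    · exact ⟨(n - (K+1)*(j+1), j), Prod.ext (by simp [hι]; omega) rfl⟩
    · exact absurd (if_neg h) hp
  have key : ∑' p : ℕ × ℕ, g p.1 * R ^ (3*(p.1 + (K+1)*(p.2+1))) = ∑' p : ℕ × ℕ, G p := by
    rw [← hinj.tsum_eq hsupp]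
    exact tsum_congr fun p => (hcomp p).symm
  rw [hLHS, key, ENNReal.tsum_prod']
  refine tsum_congr fun n => ?_
  have hvanish : ∀ j ∉ Finset.range n, G (n, j) = 0 := by
    intro j hj
    simp only [Finset.mem_range, not_lt] at hj
    have : ¬ (K+1)*(j+1) ≤ n := by nlinarith
    simp only [hG, if_neg this]
  rw [tsum_eq_sum hvanish, Finset.sum_mul]
  refine Finset.sum_congr rfl fun j _ => ?_
  simp only [hG]
  split
  · rfl
  · rw [zero_mul]

/-! ### The prefactor as a power series, for fixed q -/

section Q

variable {q : ℝ}

/-- `xs q n = q^(3(n+1))`, the factors of the Pochhammer products. -/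
def xs (q : ℝ) (n : ℕ) : ℝ := (q^3)^(n+1)

/-- Partial products of the prefactor. -/
noncomputable def PN (q : ℝ) (N : ℕ) : ℝ :=
  ∏ i ∈ Finset.range N, ((1 + xs q i) / (1 - xs q i))

lemma xs_nonneg (h0 : 0 < q) (n : ℕ) : 0 ≤ xs q n := by
  have : (0:ℝ) ≤ q^3 := by positivity
  exact pow_nonneg this _

lemma xs_le (h0 : 0 < q) (h1 : q < 1) (n : ℕ) : xs q n ≤ q^3 := by
  have h3 : 0 ≤ q^3 := by positivity
  have h31 : q^3 ≤ 1 := le_of_lt (pow_lt_one₀ h0.le h1 (by norm_num))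
  calc xs q n = (q^3)^(n+1) := rfl
  _ ≤ (q^3)^1 := pow_le_pow_of_le_one h3 h31 (by omega)
  _ = q^3 := pow_one _

lemma xs_lt_one (h0 : 0 < q) (h1 : q < 1) (n : ℕ) : xs q n < 1 :=
  lt_of_le_of_lt (xs_le h0 h1 n) (pow_lt_one₀ h0.le h1 (by norm_num))

lemma xs_summable (h0 : 0 < q) (h1 : q < 1) : Summable (xs q) := by
  have h3 : 0 ≤ q^3 := by positivity
  have h31 : q^3 < 1 := pow_lt_one₀ h0.le h1 (by norm_num)
  have : Summable (fun n : ℕ => (q^3) * (q^3)^n) :=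
    (summable_geometric_of_lt_one h3 h31).mul_left _
  refine this.congr fun n => ?_
  rw [xs, pow_succ]
  ring

lemma zs_summable (h0 : 0 < q) (h1 : q < 1) :
    Summable (fun n => xs q n / (1 - xs q n)) := by
  have h31 : q^3 < 1 := pow_lt_one₀ h0.le h1 (by norm_num)
  refine Summable.of_nonneg_of_le
    (fun n => div_nonneg (xs_nonneg h0 n) (by linarith [xs_lt_one h0 h1 n]))
    (fun n => ?_) ((xs_summable h0 h1).mul_right (1 - q^3)⁻¹)
  have hd : 0 < 1 - q^3 := by linarith
  have hd' : 0 < 1 - xs q n := by linarith [xs_lt_one h0 h1 n]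
  rw [div_eq_mul_inv]
  refine mul_le_mul_of_nonneg_left ?_ (xs_nonneg h0 n)
  exact inv_anti₀ hd (by linarith [xs_le h0 h1 n])

lemma poch_plus_eq (q : ℝ) : pochR (-(q^3)) (q^3) = ∏' n, (1 + xs q n) := by
  unfold pochR
  refine tprod_congr fun n => ?_
  rw [xs, pow_succ]
  ring

lemma poch_minus_eq (q : ℝ) : pochR (q^3) (q^3) = ∏' n, (1 - xs q n) := by
  unfold pochR
  refine tprod_congr fun n => ?_
  rw [xs, pow_succ]
  ring

lemma hasProd_num (h0 : 0 < q) (h1 : q < 1) :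
    HasProd (fun n => 1 + xs q n) (⨆ s : Finset ℕ, ∏ i ∈ s, (1 + xs q i)) :=
  hasProd_one_add (xs_nonneg h0) (xs_summable h0 h1)

lemma hasProd_den (h0 : 0 < q) (h1 : q < 1) :
    HasProd (fun n => 1 - xs q n)
      ((⨆ s : Finset ℕ, ∏ i ∈ s, (1 + xs q i / (1 - xs q i)))⁻¹) :=
  hasProd_one_sub (xs_nonneg h0) (xs_lt_one h0 h1) (zs_summable h0 h1)

lemma den_pos (h0 : 0 < q) (h1 : q < 1) : 0 < pochR (q^3) (q^3) := by
  rw [poch_minus_eq, (hasProd_den h0 h1).tprod_eq]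
  have h1' : (1:ℝ) ≤ ⨆ s : Finset ℕ, ∏ i ∈ s, (1 + xs q i / (1 - xs q i)) :=
    one_le_iSup_prod (fun n => div_nonneg (xs_nonneg h0 n)
      (by linarith [xs_lt_one h0 h1 n])) (zs_summable h0 h1)
  exact inv_pos.mpr (lt_of_lt_of_le zero_lt_one h1')

lemma num_pos (h0 : 0 < q) (h1 : q < 1) : 0 < pochR (-(q^3)) (q^3) := by
  rw [poch_plus_eq, (hasProd_num h0 h1).tprod_eq]
  exact lt_of_lt_of_le zero_lt_one (one_le_iSup_prod (xs_nonneg h0) (xs_summable h0 h1))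

lemma tendsto_PN (h0 : 0 < q) (h1 : q < 1) :
    Filter.Tendsto (PN q) Filter.atTop
      (nhds (pochR (-(q^3)) (q^3) / pochR (q^3) (q^3))) := by
  have hnum := (hasProd_num h0 h1).tendsto_prod_nat
  have hden := (hasProd_den h0 h1).tendsto_prod_nat
  rw [← (hasProd_num h0 h1).tprod_eq, ← poch_plus_eq] at hnum
  rw [← (hasProd_den h0 h1).tprod_eq, ← poch_minus_eq] at hden
  have hD : pochR (q^3) (q^3) ≠ 0 := ne_of_gt (den_pos h0 h1)
  have := hnum.div hden hD
  refine this.congr fun N => ?_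
  simp only [Pi.div_apply]
  rw [PN, ← Finset.prod_div_distrib]

lemma PN_nonneg (h0 : 0 < q) (h1 : q < 1) (N : ℕ) : 0 ≤ PN q N := by
  refine Finset.prod_nonneg fun i _ => ?_
  have hx := xs_nonneg h0 i
  have hx1 := xs_lt_one h0 h1 i
  exact div_nonneg (by linarith) (by linarith)

lemma PN_mono (h0 : 0 < q) (h1 : q < 1) : Monotone (PN q) := by
  apply monotone_nat_of_le_succ
  intro N
  rw [PN, PN, Finset.prod_range_succ]
  have hfac : (1:ℝ) ≤ (1 + xs q N) / (1 - xs q N) := by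
    have h1' := xs_lt_one h0 h1 N
    have h0' := xs_nonneg h0 N
    rw [le_div_iff₀ (by linarith)]
    linarith
  exact le_mul_of_one_le_right (PN_nonneg h0 h1 N) hfac

lemma factor_ofReal (h0 : 0 < q) (h1 : q < 1) (M : ℕ) (hM : 1 ≤ M) :
    ENNReal.ofReal ((1 + q^M) / (1 - q^M))
      = 1 + 2 * ∑' j : ℕ, (ENNReal.ofReal q) ^ (M*(j+1)) := by
  have hy0 : (0:ℝ) ≤ q^M := by positivity
  have hy1 : q^M < 1 := pow_lt_one₀ h0.le h1 (by omega)
  have hgeo : ∑' j : ℕ, (q^M)^j = (1 - q^M)⁻¹ := tsum_geometric_of_lt_one hy0 hy1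
  have hsum : Summable (fun j : ℕ => q^(M*(j+1))) := by
    have : Summable (fun j : ℕ => q^M * (q^M)^j) :=
      (summable_geometric_of_lt_one hy0 hy1).mul_left _
    refine this.congr fun j => ?_
    rw [← pow_succ', ← pow_mul]
  have hreal : (1 + q^M) / (1 - q^M) = 1 + 2 * ∑' j : ℕ, q^(M*(j+1)) := by
    have hsum2 : ∑' j : ℕ, q^(M*(j+1)) = q^M * (1 - q^M)⁻¹ := by
      rw [← hgeo, ← tsum_mul_left]
      refine tsum_congr fun j => ?_
      rw [← pow_succ', ← pow_mul]
    rw [hsum2]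
    have hne : (1:ℝ) - q^M ≠ 0 := by linarith
    field_simp
    ring
  rw [hreal]
  have ht0 : (0:ℝ) ≤ ∑' j : ℕ, q^(M*(j+1)) := tsum_nonneg fun j => by positivity
  rw [ENNReal.ofReal_add (by norm_num) (by positivity), ENNReal.ofReal_one,
    ENNReal.ofReal_mul (by norm_num : (0:ℝ) ≤ 2)]
  congr 1
  rw [ENNReal.ofReal_ofNat]
  congr 1
  rw [ENNReal.ofReal_tsum_of_nonneg (fun j => by positivity) hsum]
  exact tsum_congr fun j => ENNReal.ofReal_pow h0.le _

lemma ofReal_PN (h0 : 0 < q) (h1 : q < 1) (N : ℕ) :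
    ENNReal.ofReal (PN q N)
      = ∑' c : ℕ, (pn N c : ℝ≥0∞) * (ENNReal.ofReal q) ^ (3*c) := by
  induction N with
  | zero =>
      rw [PN, Finset.prod_range_zero, ENNReal.ofReal_one]
      rw [tsum_eq_single 0 (by
        intro c hc
        simp [pn, if_neg hc])]
      simp [pn]
  | succ N ih =>
      have hstep : PN q (N+1) = PN q N * ((1 + q^(3*(N+1))) / (1 - q^(3*(N+1)))) := by
        rw [PN, Finset.prod_range_succ, ← PN]
        congr 2 <;> rw [xs, ← pow_mul]
      rw [hstep, ENNReal.ofReal_mul (PN_nonneg h0 h1 N), ih,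
        factor_ofReal h0 h1 (3*(N+1)) (by omega)]
      set R := ENNReal.ofReal q with hR
      set f : ℕ → ℝ≥0∞ := fun c => (pn N c : ℝ≥0∞) * R ^ (3*c) with hf
      have hprod : (∑' c, f c) * (1 + 2 * ∑' j : ℕ, R ^ ((3*(N+1))*(j+1)))
          = (∑' c, f c) + 2 * ((∑' c, f c) * (∑' j : ℕ, R ^ ((3*(N+1))*(j+1)))) := by
        ring
      rw [hprod]
      have hdouble : (∑' c, f c) * (∑' j : ℕ, R ^ ((3*(N+1))*(j+1)))
          = ∑' (c : ℕ), ∑' (j : ℕ), (pn N c : ℝ≥0∞) * R ^ (3*(c + (N+1)*(j+1))) := by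
        rw [← ENNReal.tsum_mul_right]
        refine tsum_congr fun c => ?_
        rw [← ENNReal.tsum_mul_left]
        refine tsum_congr fun j => ?_
        rw [hf, mul_assoc, ← pow_add]
        congr 2
        ring
      rw [hdouble, regroup2 (fun c => (pn N c : ℝ≥0∞)) N R]
      rw [← ENNReal.tsum_mul_left, ← ENNReal.tsum_add]
      refine tsum_congr fun n => ?_
      rw [pn_succ]
      push_cast
      ring

end Q


/-! ### Monotone convergence and the stabilized prefactor series -/

lemma tsum_iSup_mono {f : ℕ → ℕ → ℝ≥0∞} (hmono : ∀ c, Monotone (fun N => f N c)) :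
    ⨆ N, ∑' c, f N c = ∑' c, ⨆ N, f N c := by
  refine le_antisymm (iSup_le fun N => ENNReal.tsum_le_tsum fun c => le_iSup (fun N => f N c) N) ?_
  rw [ENNReal.tsum_eq_iSup_sum]
  refine iSup_le fun s => ?_
  rw [ENNReal.finsetSum_iSup_of_monotone (fun c => hmono c)]
  exact iSup_mono fun N => ENNReal.sum_le_tsum s

lemma iSup_pn_cast (c : ℕ) : (⨆ N, (pn N c : ℝ≥0∞)) = (pA c : ℝ≥0∞) := by
  refine le_antisymm (iSup_le fun N => Nat.cast_le.mpr (pn_le_pA N c)) ?_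
  exact le_iSup_of_le c (by rw [pA])

lemma prefactor_series {q : ℝ} (h0 : 0 < q) (h1 : q < 1) :
    ENNReal.ofReal (pochR (-(q^3)) (q^3) / pochR (q^3) (q^3))
      = ∑' c : ℕ, (pA c : ℝ≥0∞) * (ENNReal.ofReal q) ^ (3*c) := by
  set R := ENNReal.ofReal q with hR
  have hmono : Monotone (fun N => ENNReal.ofReal (PN q N)) :=
    fun a b h => ENNReal.ofReal_le_ofReal (PN_mono h0 h1 h)
  have htend : Filter.Tendsto (fun N => ENNReal.ofReal (PN q N)) Filter.atTop
      (nhds (ENNReal.ofReal (pochR (-(q^3)) (q^3) / pochR (q^3) (q^3)))) :=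
    (ENNReal.continuous_ofReal.tendsto _).comp (tendsto_PN h0 h1)
  rw [← iSup_eq_of_tendsto hmono htend]
  have h1' : ∀ N, ENNReal.ofReal (PN q N) = ∑' c : ℕ, (pn N c : ℝ≥0∞) * R ^ (3*c) :=
    ofReal_PN h0 h1
  calc ⨆ N, ENNReal.ofReal (PN q N)
      = ⨆ N, ∑' c : ℕ, (pn N c : ℝ≥0∞) * R ^ (3*c) := by
        exact iSup_congr h1'
  _ = ∑' c : ℕ, ⨆ N, (pn N c : ℝ≥0∞) * R ^ (3*c) := by
        refine tsum_iSup_mono fun c => ?_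
        intro N N' h
        exact mul_le_mul_left (Nat.cast_le.mpr (pn_mono_N c h)) _
  _ = ∑' c : ℕ, (pA c : ℝ≥0∞) * R ^ (3*c) := by
        refine tsum_congr fun c => ?_
        rw [← iSup_pn_cast c, ENNReal.iSup_mul]

/-! ### The Lambert series side -/

/-- The summand of the bilateral series. -/
noncomputable def tZ (q : ℝ) (n : ℤ) : ℝ :=
  (-1 : ℝ) ^ n * q ^ (3 * n ^ 2 + 6 * n + 1) / (1 - q ^ (6 * n + 2))

noncomputable def yq (q : ℝ) (n : ℕ) : ℝ := q^(3*n^2+6*n+1) / (1 - q^(6*n+2))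
noncomputable def zq (q : ℝ) (n : ℕ) : ℝ := q^(3*n^2+6*n+2) / (1 - q^(6*n+4))

lemma qpow_lt_one {q : ℝ} (h0 : 0 < q) (h1 : q < 1) {m : ℕ} (hm : m ≠ 0) : q^m < 1 :=
  pow_lt_one₀ h0.le h1 hm

lemma summable_lambert {q : ℝ} (h0 : 0 < q) (h1 : q < 1) (E D : ℕ → ℕ)
    (hE : ∀ n, n ≤ E n) (hD : ∀ n, 2 ≤ D n) :
    Summable (fun n => q^(E n) / (1 - q^(D n))) := by
  have hq2 : q^2 < 1 := qpow_lt_one h0 h1 (by norm_num)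
  have hden : ∀ n, 1 - q^2 ≤ 1 - q^(D n) := by
    intro n
    have : q^(D n) ≤ q^2 := pow_le_pow_of_le_one h0.le h1.le (hD n)
    linarith
  have hnum : ∀ n, q^(E n) ≤ q^n := fun n => pow_le_pow_of_le_one h0.le h1.le (hE n)
  refine Summable.of_nonneg_of_le (fun n => ?_) (fun n => ?_)
    ((summable_geometric_of_lt_one h0.le h1).mul_right (1 - q^2)⁻¹)
  · have : 0 < 1 - q^(D n) := by
      have := qpow_lt_one h0 h1 (show D n ≠ 0 by have := hD n; omega)
      linarith
    positivity
  · have hDn : 0 < 1 - q^(D n) := by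
      have := qpow_lt_one h0 h1 (show D n ≠ 0 by have := hD n; omega)
      linarith
    calc q^(E n) / (1 - q^(D n)) ≤ q^n / (1 - q^2) :=
          div_le_div₀ (by positivity) (hnum n) (by linarith) (hden n)
    _ = q^n * (1 - q^2)⁻¹ := div_eq_mul_inv _ _

lemma yq_summable {q : ℝ} (h0 : 0 < q) (h1 : q < 1) : Summable (yq q) :=
  summable_lambert h0 h1 _ _ (fun n => by nlinarith) (fun n => by omega)

lemma zq_summable {q : ℝ} (h0 : 0 < q) (h1 : q < 1) : Summable (zq q) :=
  summable_lambert h0 h1 _ _ (fun n => by nlinarith) (fun n => by omega)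

lemma yq_nonneg {q : ℝ} (h0 : 0 < q) (h1 : q < 1) (n : ℕ) : 0 ≤ yq q n := by
  have : q^(6*n+2) < 1 := qpow_lt_one h0 h1 (by omega)
  rw [yq]
  have h2 : (0:ℝ) < 1 - q^(6*n+2) := by linarith
  positivity

lemma zq_nonneg {q : ℝ} (h0 : 0 < q) (h1 : q < 1) (n : ℕ) : 0 ≤ zq q n := by
  have : q^(6*n+4) < 1 := qpow_lt_one h0 h1 (by omega)
  rw [zq]
  have h2 : (0:ℝ) < 1 - q^(6*n+4) := by linarith
  positivity

lemma tZ_nat (q : ℝ) (n : ℕ) : tZ q n = (-1)^n * yq q n := by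
  unfold tZ yq
  have e1 : (3 * (n:ℤ)^2 + 6*(n:ℤ) + 1) = ((3*n^2+6*n+1 : ℕ) : ℤ) := by push_cast; ring
  have e2 : (6*(n:ℤ)+2) = ((6*n+2 : ℕ) : ℤ) := by push_cast; ring
  rw [e1, e2, zpow_natCast, zpow_natCast, zpow_natCast]
  ring

lemma tZ_neg {q : ℝ} (h0 : 0 < q) (h1 : q < 1) (m : ℕ) :
    tZ q (-((m:ℤ)+1)) = (-1)^m * zq q m := by
  unfold tZ zq
  have hq0 : q ≠ 0 := ne_of_gt h0
  set c : ℕ := 6*m+4 with hc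
  set E : ℕ := 3*m^2+6*m+2 with hE
  have hqc : q^c < 1 := qpow_lt_one h0 h1 (by omega)
  have hqcne : (1:ℝ) - q^c ≠ 0 := by linarith
  have hqcpos : (0:ℝ) < q^c := by positivity
  have e1 : 3 * (-((m:ℤ)+1))^2 + 6*(-((m:ℤ)+1)) + 1 = (E : ℤ) - (c : ℤ) := by
    rw [hE, hc]; push_cast; ring
  have e2 : 6*(-((m:ℤ)+1))+2 = -(c : ℤ) := by rw [hc]; push_cast; ring
  rw [e1, e2]
  have hz1 : q ^ ((E:ℤ) - (c:ℤ)) = q^E / q^c := by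
    rw [zpow_sub₀ hq0, zpow_natCast, zpow_natCast]
  have hz2 : q ^ (-(c:ℤ)) = (q^c)⁻¹ := by
    rw [zpow_neg, zpow_natCast]
  have hsgn : (-1 : ℝ) ^ (-((m:ℤ)+1)) = -(-1:ℝ)^m := by
    have h1' : (-((m:ℤ)+1)) = -(((m+1 : ℕ)) : ℤ) := by push_cast; ring
    rw [h1', zpow_neg, zpow_natCast]
    rw [pow_succ]
    rcases Nat.even_or_odd m with he | ho
    · rw [he.neg_one_pow]; norm_num
    · rw [ho.neg_one_pow]; norm_num
  rw [hz1, hz2, hsgn]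
  have h3 : q^c - 1 ≠ 0 := fun h => hqcne (by linarith)
  have h4 : 1 - (q^c)⁻¹ = (q^c - 1)/(q^c) := by field_simp
  rw [h4]
  field_simp
  ring

lemma S_split {q : ℝ} (h0 : 0 < q) (h1 : q < 1) :
    ∑' n : ℤ, tZ q n
      = (∑' k : ℕ, (yq q (2*k) + zq q (2*k)))
        - ∑' k : ℕ, (yq q (2*k+1) + zq q (2*k+1)) := by
  have hy := yq_summable h0 h1
  have hz := zq_summable h0 h1
  have hys : Summable (fun n : ℕ => (-1:ℝ)^n * yq q n) := by
    refine Summable.of_abs (hy.congr fun n => ?_)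
    rw [abs_mul, abs_pow, abs_neg, abs_one, one_pow, one_mul,
      abs_of_nonneg (yq_nonneg h0 h1 n)]
  have hzs : Summable (fun n : ℕ => (-1:ℝ)^n * zq q n) := by
    refine Summable.of_abs (hz.congr fun n => ?_)
    rw [abs_mul, abs_pow, abs_neg, abs_one, one_pow, one_mul,
      abs_of_nonneg (zq_nonneg h0 h1 n)]
  have hnat : Summable (fun n : ℕ => tZ q n) := hys.congr fun n => (tZ_nat q n).symm
  have hneg : Summable (fun n : ℕ => tZ q (-((n:ℤ)+1))) :=
    hzs.congr fun n => (tZ_neg h0 h1 n).symm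
  rw [tsum_of_nat_of_neg_add_one hnat hneg]
  have h1sum : ∑' n : ℕ, tZ q n = ∑' n : ℕ, (-1:ℝ)^n * yq q n :=
    tsum_congr (tZ_nat q)
  have h2sum : ∑' n : ℕ, tZ q (-((n:ℤ)+1)) = ∑' n : ℕ, (-1:ℝ)^n * zq q n :=
    tsum_congr (tZ_neg h0 h1)
  rw [h1sum, h2sum, ← Summable.tsum_add hys hzs]
  have hcomb : ∀ n : ℕ, (-1:ℝ)^n * yq q n + (-1:ℝ)^n * zq q n
      = (-1:ℝ)^n * (yq q n + zq q n) := fun n => by ring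
  rw [tsum_congr hcomb]
  set f : ℕ → ℝ := fun n => (-1:ℝ)^n * (yq q n + zq q n) with hf
  have hfe : ∀ k, f (2*k) = yq q (2*k) + zq q (2*k) := by
    intro k
    rw [hf]
    simp only [pow_mul]
    norm_num
  have hfo : ∀ k, f (2*k+1) = -(yq q (2*k+1) + zq q (2*k+1)) := by
    intro k
    rw [hf]
    simp only [pow_succ, pow_mul]
    norm_num
  have hinj2 : Function.Injective (fun k : ℕ => 2*k) := fun a b h => by dsimp at h; omega
  have hinj2' : Function.Injective (fun k : ℕ => 2*k+1) := fun a b h => by dsimp at h; omega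
  have hse : Summable (fun k => f (2*k)) := by
    refine Summable.congr ?_ fun k => (hfe k).symm
    exact (hy.comp_injective hinj2).add (hz.comp_injective hinj2)
  have hso : Summable (fun k => f (2*k+1)) := by
    refine Summable.congr ?_ fun k => (hfo k).symm
    exact ((hy.comp_injective hinj2').add (hz.comp_injective hinj2')).neg
  rw [← tsum_even_add_odd hse hso]
  rw [tsum_congr hfe, tsum_congr hfo, tsum_neg]
  ring


/-! ### ENNReal conversions of the Lambert sums -/

lemma tsum_mul_tsum_ennreal {α β : Type*} (f : α → ℝ≥0∞) (g : β → ℝ≥0∞) :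
    (∑' a, f a) * (∑' b, g b) = ∑' p : α × β, f p.1 * g p.2 := by
  rw [ENNReal.tsum_prod']
  rw [← ENNReal.tsum_mul_right]
  exact tsum_congr fun a => (ENNReal.tsum_mul_left).symm

lemma ofReal_lambert {q : ℝ} (h0 : 0 < q) (h1 : q < 1) (E D : ℕ) (hD : D ≠ 0) :
    ENNReal.ofReal (q^E / (1 - q^D)) = ∑' j : ℕ, (ENNReal.ofReal q) ^ (E + D*j) := by
  have hy1 : q^D < 1 := qpow_lt_one h0 h1 hD
  have hy0 : (0:ℝ) ≤ q^D := by positivity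
  have hsum : Summable (fun j : ℕ => q^(E + D*j)) := by
    have : Summable (fun j : ℕ => q^E * (q^D)^j) :=
      (summable_geometric_of_lt_one hy0 hy1).mul_left _
    refine this.congr fun j => ?_
    rw [← pow_mul, ← pow_add]
  have hreal : q^E / (1 - q^D) = ∑' j : ℕ, q^(E + D*j) := by
    rw [div_eq_mul_inv, ← tsum_geometric_of_lt_one hy0 hy1, ← tsum_mul_left]
    exact tsum_congr fun j => by rw [← pow_mul, ← pow_add]
  rw [hreal, ENNReal.ofReal_tsum_of_nonneg (fun j => by positivity) hsum]
  exact tsum_congr fun j => ENNReal.ofReal_pow h0.le _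

lemma yq_even (q : ℝ) (k : ℕ) : yq q (2*k) = q^(eA k) / (1 - q^(da k)) := by
  have hE : 3*(2*k)^2+6*(2*k)+1 = eA k := by unfold eA; ring
  have hD : 6*(2*k)+2 = da k := by unfold da; ring
  rw [yq, hE, hD]

lemma zq_even (q : ℝ) (k : ℕ) : zq q (2*k) = q^(eA k + 1) / (1 - q^(da k + 2)) := by
  have hE : 3*(2*k)^2+6*(2*k)+2 = eA k + 1 := by unfold eA; ring
  have hD : 6*(2*k)+4 = da k + 2 := by unfold da; ring
  rw [zq, hE, hD]

lemma yq_odd (q : ℝ) (k : ℕ) : yq q (2*k+1) = q^(eB k) / (1 - q^(db k)) := by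
  have hE : 3*(2*k+1)^2+6*(2*k+1)+1 = eB k := by unfold eB; ring
  have hD : 6*(2*k+1)+2 = db k := by unfold db; ring
  rw [yq, hE, hD]

lemma zq_odd (q : ℝ) (k : ℕ) : zq q (2*k+1) = q^(eB k + 1) / (1 - q^(db k + 2)) := by
  have hE : 3*(2*k+1)^2+6*(2*k+1)+2 = eB k + 1 := by unfold eB; ring
  have hD : 6*(2*k+1)+4 = db k + 2 := by unfold db; ring
  rw [zq, hE, hD]

lemma ofReal_Sp {q : ℝ} (h0 : 0 < q) (h1 : q < 1) :
    ENNReal.ofReal (∑' k : ℕ, (yq q (2*k) + zq q (2*k)))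
      = ∑' x : ℕ × ℕ,
          ((ENNReal.ofReal q)^(e1 x.1 x.2) + (ENNReal.ofReal q)^(e2 x.1 x.2)) := by
  have hy := yq_summable h0 h1
  have hz := zq_summable h0 h1
  have hinj2 : Function.Injective (fun k : ℕ => 2*k) := fun a b h => by dsimp at h; omega
  have hsum : Summable (fun k : ℕ => yq q (2*k) + zq q (2*k)) :=
    (hy.comp_injective hinj2).add (hz.comp_injective hinj2)
  rw [ENNReal.ofReal_tsum_of_nonneg
    (fun k => add_nonneg (yq_nonneg h0 h1 _) (zq_nonneg h0 h1 _)) hsum]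
  rw [ENNReal.tsum_prod']
  refine tsum_congr fun k => ?_
  rw [ENNReal.ofReal_add (yq_nonneg h0 h1 _) (zq_nonneg h0 h1 _)]
  rw [yq_even, zq_even,
    ofReal_lambert h0 h1 (eA k) (da k) (by rw [da]; omega),
    ofReal_lambert h0 h1 (eA k + 1) (da k + 2) (by omega),
    ← ENNReal.tsum_add]
  exact tsum_congr fun j => by simp only [e1, e2]

lemma ofReal_Sn {q : ℝ} (h0 : 0 < q) (h1 : q < 1) :
    ENNReal.ofReal (∑' k : ℕ, (yq q (2*k+1) + zq q (2*k+1)))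
      = ∑' x : ℕ × ℕ,
          ((ENNReal.ofReal q)^(e3 x.1 x.2) + (ENNReal.ofReal q)^(e4 x.1 x.2)) := by
  have hy := yq_summable h0 h1
  have hz := zq_summable h0 h1
  have hinj2' : Function.Injective (fun k : ℕ => 2*k+1) := fun a b h => by dsimp at h; omega
  have hsum : Summable (fun k : ℕ => yq q (2*k+1) + zq q (2*k+1)) :=
    (hy.comp_injective hinj2').add (hz.comp_injective hinj2')
  rw [ENNReal.ofReal_tsum_of_nonneg
    (fun k => add_nonneg (yq_nonneg h0 h1 _) (zq_nonneg h0 h1 _)) hsum]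
  rw [ENNReal.tsum_prod']
  refine tsum_congr fun k => ?_
  rw [ENNReal.ofReal_add (yq_nonneg h0 h1 _) (zq_nonneg h0 h1 _)]
  rw [yq_odd, zq_odd,
    ofReal_lambert h0 h1 (eB k) (db k) (by rw [db]; omega),
    ofReal_lambert h0 h1 (eB k + 1) (db k + 2) (by omega),
    ← ENNReal.tsum_add]
  exact tsum_congr fun j => by simp only [e3, e4]

/-! ### Regrouping by total weight -/

lemma regroup3 (w : ℕ × ℕ × ℕ → ℕ) (R : ℝ≥0∞) :
    ∑' x : ℕ × ℕ × ℕ, (pA x.1 : ℝ≥0∞) * R ^ (w x) = ∑' n : ℕ, cw w n * R ^ n := by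
  have h1 : ∑' x : ℕ × ℕ × ℕ, (pA x.1 : ℝ≥0∞) * R ^ (w x)
      = ∑' p : (Σ n : ℕ, {y : ℕ × ℕ × ℕ // w y = n}),
          (pA ((Equiv.sigmaFiberEquiv w) p).1 : ℝ≥0∞) * R ^ (w ((Equiv.sigmaFiberEquiv w) p)) :=
    ((Equiv.sigmaFiberEquiv w).tsum_eq
      (fun x : ℕ × ℕ × ℕ => (pA x.1 : ℝ≥0∞) * R ^ (w x))).symm
  rw [h1, ENNReal.tsum_sigma']
  refine tsum_congr fun n => ?_
  rw [cw, ← ENNReal.tsum_mul_right]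
  refine tsum_congr fun x => ?_
  have hx : w ((Equiv.sigmaFiberEquiv w) ⟨n, x⟩) = n := x.2
  simp only [Equiv.sigmaFiberEquiv, Equiv.coe_fn_mk]
  rw [x.2]

/-! ### The coefficient inequality -/

lemma cw_shift_le {wlo whi : ℕ × ℕ × ℕ → ℕ}
    (hsh : ∀ c k j, wlo (c, k, j) = whi (c + (4*k+3+2*j), k, j)) (n : ℕ) :
    cw wlo n ≤ cw whi n := by
  set Φ : {y : ℕ × ℕ × ℕ // wlo y = n} → {y : ℕ × ℕ × ℕ // whi y = n} :=
    fun x => ⟨(x.1.1 + (4*x.1.2.1+3+2*x.1.2.2), x.1.2.1, x.1.2.2), by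
      obtain ⟨⟨c, k, j⟩, hx⟩ := x
      simpa [← hsh c k j] using hx⟩ with hΦ
  have hinj : Function.Injective Φ := by
    rintro ⟨⟨c, k, j⟩, hx⟩ ⟨⟨c', k', j'⟩, hx'⟩ h
    simp only [hΦ, Subtype.mk.injEq, Prod.mk.injEq] at h
    obtain ⟨h1, h2, h3⟩ := h
    subst h2; subst h3
    exact Subtype.ext (by simp; omega)
  calc cw wlo n = ∑' x : {y // wlo y = n}, (pA (x : ℕ × ℕ × ℕ).1 : ℝ≥0∞) := rfl
  _ ≤ ∑' x : {y // wlo y = n}, (pA ((Φ x) : ℕ × ℕ × ℕ).1 : ℝ≥0∞) := by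
      refine ENNReal.tsum_le_tsum fun x => Nat.cast_le.mpr ?_
      exact pA_mono (Nat.le_add_right _ _)
  _ ≤ ∑' y : {y // whi y = n}, (pA (y : ℕ × ℕ × ℕ).1 : ℝ≥0∞) :=
      ENNReal.tsum_comp_le_tsum_of_injective hinj
        (fun y : {y // whi y = n} => (pA (y : ℕ × ℕ × ℕ).1 : ℝ≥0∞))


/-! ### Putting the two sides together -/

lemma ofReal_LSp {q : ℝ} (h0 : 0 < q) (h1 : q < 1) :
    ENNReal.ofReal ((pochR (-(q^3)) (q^3) / pochR (q^3) (q^3))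
        * ∑' k : ℕ, (yq q (2*k) + zq q (2*k)))
      = ∑' n : ℕ, (cw w1 n + cw w2 n) * (ENNReal.ofReal q) ^ n := by
  set R := ENNReal.ofReal q with hR
  rw [ENNReal.ofReal_mul (div_nonneg (num_pos h0 h1).le (den_pos h0 h1).le)]
  rw [prefactor_series h0 h1, ofReal_Sp h0 h1, tsum_mul_tsum_ennreal]
  have hsplit : ∀ p : ℕ × ℕ × ℕ,
      (pA p.1 : ℝ≥0∞) * R^(3*p.1) * (R^(e1 p.2.1 p.2.2) + R^(e2 p.2.1 p.2.2))
        = (pA p.1 : ℝ≥0∞) * R^(w1 p) + (pA p.1 : ℝ≥0∞) * R^(w2 p) := by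
    intro p
    simp only [w1, w2, pow_add]
    ring
  rw [tsum_congr hsplit, ENNReal.tsum_add, regroup3 w1 R, regroup3 w2 R,
    ← ENNReal.tsum_add]
  exact tsum_congr fun n => (add_mul _ _ _).symm

lemma ofReal_LSn {q : ℝ} (h0 : 0 < q) (h1 : q < 1) :
    ENNReal.ofReal ((pochR (-(q^3)) (q^3) / pochR (q^3) (q^3))
        * ∑' k : ℕ, (yq q (2*k+1) + zq q (2*k+1)))
      = ∑' n : ℕ, (cw w3 n + cw w4 n) * (ENNReal.ofReal q) ^ n := by
  set R := ENNReal.ofReal q with hR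
  rw [ENNReal.ofReal_mul (div_nonneg (num_pos h0 h1).le (den_pos h0 h1).le)]
  rw [prefactor_series h0 h1, ofReal_Sn h0 h1, tsum_mul_tsum_ennreal]
  have hsplit : ∀ p : ℕ × ℕ × ℕ,
      (pA p.1 : ℝ≥0∞) * R^(3*p.1) * (R^(e3 p.2.1 p.2.2) + R^(e4 p.2.1 p.2.2))
        = (pA p.1 : ℝ≥0∞) * R^(w3 p) + (pA p.1 : ℝ≥0∞) * R^(w4 p) := by
    intro p
    simp only [w3, w4, pow_add]
    ring
  rw [tsum_congr hsplit, ENNReal.tsum_add, regroup3 w3 R, regroup3 w4 R,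
    ← ENNReal.tsum_add]
  exact tsum_congr fun n => (add_mul _ _ _).symm

end Stmt19

theorem stmt_19 :
    ∃ a : ℕ → ℝ, (∀ n, 0 ≤ a n) ∧
      ∀ q : ℝ, 0 < q → q < 1 →
        pochR (-(q ^ 3)) (q ^ 3) / pochR (q ^ 3) (q ^ 3) *
            (∑' n : ℤ, (-1 : ℝ) ^ n * q ^ (3 * n ^ 2 + 6 * n + 1) / (1 - q ^ (6 * n + 2))) =
          ∑' n : ℕ, a n * q ^ n := by
  classical
  refine ⟨Stmt19.aSeq, Stmt19.aSeq_nonneg, fun q h0 h1 => ?_⟩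
  open Stmt19 in
  have hSz : (∑' n : ℤ, (-1 : ℝ) ^ n * q ^ (3 * n ^ 2 + 6 * n + 1) / (1 - q ^ (6 * n + 2)))
      = ∑' n : ℤ, tZ q n := rfl
  rw [hSz, Stmt19.S_split h0 h1, mul_sub]
  set R := ENNReal.ofReal q with hR
  have hL0 : 0 ≤ pochR (-(q^3)) (q^3) / pochR (q^3) (q^3) :=
    div_nonneg (Stmt19.num_pos h0 h1).le (Stmt19.den_pos h0 h1).le
  have hSp0 : 0 ≤ ∑' k : ℕ, (Stmt19.yq q (2*k) + Stmt19.zq q (2*k)) :=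
    tsum_nonneg fun k => add_nonneg (Stmt19.yq_nonneg h0 h1 _) (Stmt19.zq_nonneg h0 h1 _)
  have hSn0 : 0 ≤ ∑' k : ℕ, (Stmt19.yq q (2*k+1) + Stmt19.zq q (2*k+1)) :=
    tsum_nonneg fun k => add_nonneg (Stmt19.yq_nonneg h0 h1 _) (Stmt19.zq_nonneg h0 h1 _)
  have hU := Stmt19.ofReal_LSp h0 h1
  have hV := Stmt19.ofReal_LSn h0 h1
  rw [← hR] at hU hV
  have hUfin : (∑' n : ℕ, (Stmt19.cw Stmt19.w1 n + Stmt19.cw Stmt19.w2 n) * R ^ n) ≠ ⊤ := by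
    rw [← hU]; exact ENNReal.ofReal_ne_top
  have hVfin : (∑' n : ℕ, (Stmt19.cw Stmt19.w3 n + Stmt19.cw Stmt19.w4 n) * R ^ n) ≠ ⊤ := by
    rw [← hV]; exact ENNReal.ofReal_ne_top
  have hRn0 : ∀ n : ℕ, R ^ n ≠ 0 := by
    intro n
    apply pow_ne_zero
    rw [hR, Ne, ENNReal.ofReal_eq_zero]
    linarith
  have hRntop : ∀ n : ℕ, R ^ n ≠ ⊤ := fun n => ENNReal.pow_ne_top ENNReal.ofReal_ne_top
  have hC12 : ∀ n, (Stmt19.cw Stmt19.w1 n + Stmt19.cw Stmt19.w2 n) ≠ ⊤ := by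
    intro n htop
    have hle := ENNReal.le_tsum (f := fun n => (Stmt19.cw Stmt19.w1 n + Stmt19.cw Stmt19.w2 n) * R ^ n) n
    rw [htop, ENNReal.top_mul (hRn0 n)] at hle
    exact hUfin (top_le_iff.mp hle)
  have hC34 : ∀ n, (Stmt19.cw Stmt19.w3 n + Stmt19.cw Stmt19.w4 n) ≠ ⊤ := by
    intro n htop
    have hle := ENNReal.le_tsum (f := fun n => (Stmt19.cw Stmt19.w3 n + Stmt19.cw Stmt19.w4 n) * R ^ n) n
    rw [htop, ENNReal.top_mul (hRn0 n)] at hle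
    exact hVfin (top_le_iff.mp hle)
  have hle34 : ∀ n, (Stmt19.cw Stmt19.w3 n + Stmt19.cw Stmt19.w4 n)
      ≤ (Stmt19.cw Stmt19.w1 n + Stmt19.cw Stmt19.w2 n) := fun n =>
    add_le_add (Stmt19.cw_shift_le Stmt19.w3_shift n) (Stmt19.cw_shift_le Stmt19.w4_shift n)
  have hLSp : pochR (-(q^3)) (q^3) / pochR (q^3) (q^3)
        * (∑' k : ℕ, (Stmt19.yq q (2*k) + Stmt19.zq q (2*k)))
      = (∑' n : ℕ, (Stmt19.cw Stmt19.w1 n + Stmt19.cw Stmt19.w2 n) * R ^ n).toReal := by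
    rw [← hU, ENNReal.toReal_ofReal (mul_nonneg hL0 hSp0)]
  have hLSn : pochR (-(q^3)) (q^3) / pochR (q^3) (q^3)
        * (∑' k : ℕ, (Stmt19.yq q (2*k+1) + Stmt19.zq q (2*k+1)))
      = (∑' n : ℕ, (Stmt19.cw Stmt19.w3 n + Stmt19.cw Stmt19.w4 n) * R ^ n).toReal := by
    rw [← hV, ENNReal.toReal_ofReal (mul_nonneg hL0 hSn0)]
  rw [hLSp, hLSn]
  rw [ENNReal.tsum_toReal_eq (fun n => ENNReal.mul_ne_top (hC12 n) (hRntop n)),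
    ENNReal.tsum_toReal_eq (fun n => ENNReal.mul_ne_top (hC34 n) (hRntop n))]
  rw [← Summable.tsum_sub (ENNReal.summable_toReal hUfin) (ENNReal.summable_toReal hVfin)]
  refine tsum_congr fun n => ?_
  rw [ENNReal.toReal_mul, ENNReal.toReal_mul]
  have hq : (R ^ n).toReal = q ^ n := by
    rw [ENNReal.toReal_pow, hR, ENNReal.toReal_ofReal h0.le]
  rw [hq, Stmt19.aSeq, ENNReal.toReal_sub_of_le (hle34 n) (hC12 n)]
  ring
end
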